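/- arXiv:1605.07647 — 12 statements merged into one kernel-verified Lean document; each statement's English description precedes it below -/
import Mathlib

section
/- Fix j ≥ 2 and positive parameters. Suppose R_0 > 1. Then there exists exactly one tuple (S, I_1, …, I_j, R, S̃, Ĩ) of real numbers with I_1 > 0 satisfying all of the equilibrium equations. Moreover, if R_0 < 1, then no tuple with I_1 > 0 satisfies all of the equilibrium equations. -/
open Finset

/-- The coefficients `c_0 = 1`, `c_k = α_k/(α_{k+1}+μ_{k+1})` for `1 ≤ k ≤ j−2`, and
`c_{j−1} = α_{j−1}/(γ+μ_j)` of the relapsing host–vector model. -/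
noncomputable def ccoef (j : ℕ) (γ : ℝ) (α μ : ℕ → ℝ) : ℕ → ℝ := fun k =>
  if k = 0 then 1
  else if k = j - 1 then α (j - 1) / (γ + μ j)
  else α k / (α (k + 1) + μ (k + 1))

/-- `ξ = Σ_{k=1}^{j} c_0·c_1⋯c_{k−1}`. -/
noncomputable def xiSum (j : ℕ) (γ : ℝ) (α μ : ℕ → ℝ) : ℝ :=
  ∑ k ∈ Icc 1 j, ∏ l ∈ range k, ccoef j γ α μ l

/-- The equilibrium equations of the single host–vector relapsing disease model with
`j` infected compartments, restricted to constant populations `N = S̄`, `Ñ = S̄_v`. -/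
def IsEquilib (j : ℕ) (f c cv γ Sb Sbv μs μr μts μt : ℝ) (α μ : ℕ → ℝ)
    (S R St It : ℝ) (I : ℕ → ℝ) : Prop :=
  μs * (Sb - S) = f * cv * It * S / Sb ∧
  f * cv * It * S / Sb = (α 1 + μ 1) * I 1 ∧
  (∀ k, 2 ≤ k → k ≤ j - 1 → α (k - 1) * I (k - 1) = (α k + μ k) * I k) ∧
  α (j - 1) * I (j - 1) = (γ + μ j) * I j ∧
  γ * I j = μr * R ∧
  μts * (Sbv - St) = f * c * St / Sb * ∑ k ∈ Icc 1 j, I k ∧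
  f * c * St / Sb * ∑ k ∈ Icc 1 j, I k = μt * It ∧
  It = Sbv - St

lemma ccoef_pos {j : ℕ} (hj : 2 ≤ j) {γ : ℝ} {α μ : ℕ → ℝ} (hγ : 0 < γ)
    (hα : ∀ k, 1 ≤ k → k ≤ j - 1 → 0 < α k)
    (hμ : ∀ k, 1 ≤ k → k ≤ j → 0 < μ k) :
    ∀ l, l ≤ j - 1 → 0 < ccoef j γ α μ l := by
  intro l hl
  unfold ccoef
  split_ifs with h0 h1
  · norm_num
  · exact div_pos (hα _ (by omega) (by omega)) (add_pos hγ (hμ j (by omega) le_rfl))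
  · exact div_pos (hα _ (by omega) (by omega))
      (add_pos (hα _ (by omega) (by omega)) (hμ _ (by omega) (by omega)))

lemma prodc_pos {j : ℕ} (hj : 2 ≤ j) {γ : ℝ} {α μ : ℕ → ℝ} (hγ : 0 < γ)
    (hα : ∀ k, 1 ≤ k → k ≤ j - 1 → 0 < α k)
    (hμ : ∀ k, 1 ≤ k → k ≤ j → 0 < μ k) :
    ∀ k, k ≤ j → 0 < ∏ l ∈ range k, ccoef j γ α μ l := by
  intro k hk
  exact Finset.prod_pos fun l hl =>
    ccoef_pos hj hγ hα hμ l (by have := mem_range.mp hl; omega)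

lemma xi_pos {j : ℕ} (hj : 2 ≤ j) {γ : ℝ} {α μ : ℕ → ℝ} (hγ : 0 < γ)
    (hα : ∀ k, 1 ≤ k → k ≤ j - 1 → 0 < α k)
    (hμ : ∀ k, 1 ≤ k → k ≤ j → 0 < μ k) :
    0 < xiSum j γ α μ := by
  refine Finset.sum_pos (fun k hk => ?_) ⟨1, mem_Icc.mpr ⟨le_rfl, by omega⟩⟩
  exact prodc_pos hj hγ hα hμ k (mem_Icc.mp hk).2

lemma chain_eq {j : ℕ} (hj : 2 ≤ j) {γ : ℝ} {α μ : ℕ → ℝ} {I : ℕ → ℝ} (hγ : 0 < γ)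
    (hα : ∀ k, 1 ≤ k → k ≤ j - 1 → 0 < α k)
    (hμ : ∀ k, 1 ≤ k → k ≤ j → 0 < μ k)
    (hchain : ∀ k, 2 ≤ k → k ≤ j - 1 → α (k - 1) * I (k - 1) = (α k + μ k) * I k)
    (hlast : α (j - 1) * I (j - 1) = (γ + μ j) * I j) :
    ∀ k, 1 ≤ k → k ≤ j → I k = (∏ l ∈ range k, ccoef j γ α μ l) * I 1 := by
  intro k
  induction k with
  | zero => omega
  | succ n ih =>
    intro h1 h2
    rcases Nat.lt_or_ge n 1 with h | h
    · interval_cases n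
      simp [ccoef]
    · have hn := ih h (by omega)
      rw [prod_range_succ]
      rcases Nat.lt_or_ge (n + 1) j with hcase | hcase
    -- n+1 ≤ j-1
      · have hd : (0:ℝ) < α (n+1) + μ (n+1) :=
          add_pos (hα _ (by omega) (by omega)) (hμ _ (by omega) (by omega))
        have hc := hchain (n+1) (by omega) (by omega)
        simp only [Nat.add_sub_cancel] at hc
        have hcc : ccoef j γ α μ n = α n / (α (n+1) + μ (n+1)) := by
          unfold ccoef
          rw [if_neg (by omega), if_neg (by omega)]
        have hval : I (n+1) = α n / (α (n+1) + μ (n+1)) * I n := by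
          rw [div_mul_eq_mul_div, eq_div_iff hd.ne']
          linear_combination -hc
        rw [hval, hcc, hn]
        ring
      · have hcase' : n + 1 = j := by omega
        have hd : (0:ℝ) < γ + μ j := add_pos hγ (hμ j (by omega) le_rfl)
        have hcc : ccoef j γ α μ n = α (j-1) / (γ + μ j) := by
          unfold ccoef
          rw [if_neg (by omega), if_pos (by omega)]
        have hIn : I (j - 1) = I n := by rw [show j - 1 = n from by omega]
        have hval : I (n+1) = α (j-1) / (γ + μ j) * I n := by
          rw [div_mul_eq_mul_div, eq_div_iff hd.ne']
          rw [show n + 1 = j from hcase']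
          linear_combination -hlast + α (j-1) * hIn
        rw [hval, hcc, hn]
        ring

lemma solution_char (j : ℕ) (hj : 2 ≤ j)
    (f c cv γ Sb Sbv μs μr μts μt : ℝ) (α μ : ℕ → ℝ)
    (hf : 0 < f) (hc : 0 < c) (hcv : 0 < cv) (hγ : 0 < γ)
    (hSb : 0 < Sb) (hSbv : 0 < Sbv) (hμs : 0 < μs) (hμr : 0 < μr)
    (hμt : 0 < μt)
    (hα : ∀ k, 1 ≤ k → k ≤ j - 1 → 0 < α k)
    (hμ : ∀ k, 1 ≤ k → k ≤ j → 0 < μ k)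
    (S R St It : ℝ) (I : ℕ → ℝ)
    (hI1 : 0 < I 1)
    (h : IsEquilib j f c cv γ Sb Sbv μs μr μts μt α μ S R St It I) :
    I 1 * (f^2*c*cv*Sbv*xiSum j γ α μ*(α 1 + μ 1)
            + (α 1 + μ 1)*Sb*μs*f*c*xiSum j γ α μ)
      = μs*Sb*(f^2*c*cv*Sbv*xiSum j γ α μ - Sb*μt*(α 1 + μ 1))
    ∧ S = Sb - (α 1 + μ 1)*I 1/μs
    ∧ (∀ k ∈ Icc 1 j, I k = (∏ l ∈ range k, ccoef j γ α μ l) * I 1)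
    ∧ It = f*c*Sbv*xiSum j γ α μ*I 1/(Sb*μt + f*c*xiSum j γ α μ*I 1)
    ∧ St = Sbv - It
    ∧ R = γ*(∏ l ∈ range j, ccoef j γ α μ l)*I 1/μr := by
  obtain ⟨h1, h2, h3, h4, h5, h6, h7, h8⟩ := h
  have hξ : 0 < xiSum j γ α μ := xi_pos hj hγ hα hμ
  have hIk := chain_eq hj hγ hα hμ h3 h4
  have hIk' : ∀ k ∈ Icc 1 j, I k = (∏ l ∈ range k, ccoef j γ α μ l) * I 1 := by
    intro k hk
    obtain ⟨hk1, hk2⟩ := mem_Icc.mp hk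
    exact hIk k hk1 hk2
  have hsum : ∑ k ∈ Icc 1 j, I k = xiSum j γ α μ * I 1 := by
    rw [Finset.sum_congr rfl hIk', xiSum, Finset.sum_mul]
  have hden : (0:ℝ) < Sb*μt + f*c*xiSum j γ α μ*I 1 := by positivity
  have hSt : St = Sbv - It := by linarith [h8]
  have hSμ : μs * S = μs*Sb - (α 1 + μ 1)*I 1 := by
    linear_combination -(h1.trans h2)
  have hS : S = Sb - (α 1 + μ 1)*I 1/μs := by
    field_simp
    linear_combination hSμ
  rw [div_mul_eq_mul_div, div_eq_iff hSb.ne'] at h7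
  rw [hsum, hSt] at h7
  have hItden : It * (Sb*μt + f*c*xiSum j γ α μ*I 1) = f*c*Sbv*xiSum j γ α μ*I 1 := by
    linear_combination -h7
  have hIt : It = f*c*Sbv*xiSum j γ α μ*I 1/(Sb*μt + f*c*xiSum j γ α μ*I 1) := by
    rw [eq_div_iff hden.ne']
    exact hItden
  have h2c : f*cv*It*S = (α 1 + μ 1)*I 1*Sb := by
    rw [div_eq_iff hSb.ne'] at h2
    exact h2
  have hlin : I 1 * (f^2*c*cv*Sbv*xiSum j γ α μ*(α 1 + μ 1)
            + (α 1 + μ 1)*Sb*μs*f*c*xiSum j γ α μ)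
      = μs*Sb*(f^2*c*cv*Sbv*xiSum j γ α μ - Sb*μt*(α 1 + μ 1)) := by
    have hq : I 1 * (μs*Sb*(f^2*c*cv*Sbv*xiSum j γ α μ - Sb*μt*(α 1 + μ 1))
        - I 1 * (f^2*c*cv*Sbv*xiSum j γ α μ*(α 1 + μ 1)
            + (α 1 + μ 1)*Sb*μs*f*c*xiSum j γ α μ)) = 0 := by
      linear_combination μs*(Sb*μt + f*c*xiSum j γ α μ*I 1)*h2c
        - f*cv*μs*S*hItden - f^2*c*cv*Sbv*xiSum j γ α μ*I 1*hSμ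
    rcases mul_eq_zero.mp hq with hz | hz
    · exact absurd hz hI1.ne'
    · linear_combination -hz
  have hR : R = γ*(∏ l ∈ range j, ccoef j γ α μ l)*I 1/μr := by
    rw [eq_div_iff hμr.ne']
    have hIj := hIk j (by omega) le_rfl
    linear_combination -h5 + γ * hIj
  exact ⟨hlin, hS, hIk', hIt, hSt, hR⟩

lemma exist_sol (j : ℕ) (hj : 2 ≤ j)
    (f c cv γ Sb Sbv μs μr μts μt : ℝ) (α μ : ℕ → ℝ)
    (hf : 0 < f) (hc : 0 < c) (hcv : 0 < cv) (hγ : 0 < γ)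
    (hSb : 0 < Sb) (hSbv : 0 < Sbv) (hμs : 0 < μs) (hμr : 0 < μr)
    (hμt : 0 < μt)
    (hα : ∀ k, 1 ≤ k → k ≤ j - 1 → 0 < α k)
    (hμ : ∀ k, 1 ≤ k → k ≤ j → 0 < μ k)
    (hμeq : μt = μts)
    (hAD : Sb*μt*(α 1 + μ 1) < f^2*c*cv*Sbv*xiSum j γ α μ) :
    ∃ S R St It : ℝ, ∃ I : ℕ → ℝ, 0 < I 1 ∧
      IsEquilib j f c cv γ Sb Sbv μs μr μts μt α μ S R St It I := by
  subst hμeq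
  have hξ : 0 < xiSum j γ α μ := xi_pos hj hγ hα hμ
  set ξ := xiSum j γ α μ with hξdef
  set B := α 1 + μ 1 with hBdef
  have hB : 0 < B := add_pos (hα 1 le_rfl (by omega)) (hμ 1 le_rfl (by omega))
  have hE : (0:ℝ) < f^2*c*cv*Sbv*ξ*B + B*Sb*μs*f*c*ξ := by positivity
  set x0 := μs*Sb*(f^2*c*cv*Sbv*ξ - Sb*μt*B)/(f^2*c*cv*Sbv*ξ*B + B*Sb*μs*f*c*ξ)
    with hx0def
  have hx0 : 0 < x0 := by
    apply div_pos _ hE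
    have h : 0 < f^2*c*cv*Sbv*ξ - Sb*μt*B := by linarith
    positivity
  have hlin0 : x0 * (f^2*c*cv*Sbv*ξ*B + B*Sb*μs*f*c*ξ)
      = μs*Sb*(f^2*c*cv*Sbv*ξ - Sb*μt*B) := div_mul_cancel₀ _ hE.ne'
  have hden : (0:ℝ) < Sb*μt + f*c*ξ*x0 := by positivity
  set It0 := f*c*Sbv*ξ*x0/(Sb*μt + f*c*ξ*x0) with hIt0def
  have hItden : It0 * (Sb*μt + f*c*ξ*x0) = f*c*Sbv*ξ*x0 :=
    div_mul_cancel₀ _ hden.ne'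
  set S0 := Sb - B*x0/μs with hS0def
  have hSμ : μs * S0 = μs*Sb - B*x0 := by
    rw [hS0def]; field_simp
  refine ⟨S0, γ*(∏ l ∈ range j, ccoef j γ α μ l)*x0/μr, Sbv - It0, It0,
    fun k => (∏ l ∈ range k, ccoef j γ α μ l) * x0, ?_, ?_⟩
  · simpa [ccoef] using hx0
  have hI1 : (∏ l ∈ range 1, ccoef j γ α μ l) * x0 = x0 := by simp [ccoef]
  have hsum0 : ∑ k ∈ Icc 1 j, (∏ l ∈ range k, ccoef j γ α μ l) * x0 = ξ * x0 := by
    rw [hξdef, xiSum, Finset.sum_mul]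
  have he2 : f * cv * It0 * S0 / Sb = B * ((∏ l ∈ range 1, ccoef j γ α μ l) * x0) := by
    rw [hI1, div_eq_iff hSb.ne']
    have key : (μs*(Sb*μt + f*c*ξ*x0)) * (f*cv*It0*S0)
        = (μs*(Sb*μt + f*c*ξ*x0)) * (B*x0*Sb) := by
      linear_combination f*cv*μs*S0*hItden + (f^2*c*cv*Sbv*ξ)*x0*hSμ - x0*hlin0
    exact mul_left_cancel₀ (by positivity) key
  have he7 : f * c * (Sbv - It0) / Sb * (ξ * x0) = μt * It0 := by
    rw [div_mul_eq_mul_div, div_eq_iff hSb.ne']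
    linear_combination -hItden
  refine ⟨?_, he2, ?_, ?_, ?_, ?_, ?_, by ring⟩
  · -- eq1
    rw [he2, hI1]
    linear_combination -hSμ
  · -- chain
    intro k hk2 hkj
    simp only []
    have hd : (0:ℝ) < α k + μ k :=
      add_pos (hα _ (by omega) (by omega)) (hμ _ (by omega) (by omega))
    have hcc : ccoef j γ α μ (k-1) = α (k-1) / (α k + μ k) := by
      unfold ccoef
      rw [if_neg (by omega), if_neg (by omega), show k - 1 + 1 = k from by omega]
    have hps : (∏ l ∈ range k, ccoef j γ α μ l)
        = (∏ l ∈ range (k-1), ccoef j γ α μ l) * ccoef j γ α μ (k-1) := by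
      rw [show k = (k-1)+1 from by omega, prod_range_succ]
      simp
    rw [hps, hcc]
    field_simp
  · -- last
    simp only []
    have hd : (0:ℝ) < γ + μ j := add_pos hγ (hμ j (by omega) le_rfl)
    have hcc : ccoef j γ α μ (j-1) = α (j-1) / (γ + μ j) := by
      unfold ccoef
      rw [if_neg (by omega), if_pos rfl]
    have hps : (∏ l ∈ range j, ccoef j γ α μ l)
        = (∏ l ∈ range (j-1), ccoef j γ α μ l) * ccoef j γ α μ (j-1) := by
      rw [show j = (j-1)+1 from by omega, prod_range_succ]
      simp
    rw [hps, hcc]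
    field_simp
  · -- eq5
    simp only []
    field_simp
  · -- eq6
    simp only []
    rw [hsum0, he7]
    ring
  · -- eq7
    simp only []
    rw [hsum0]
    exact he7

/-- If `R_0 > 1` there exists exactly one tuple
`(S, I_1, …, I_j, R, S̃, Ĩ)` with `I_1 > 0` satisfying all the equilibrium equations
(uniqueness being agreement of all the listed components); and if `R_0 < 1` no tuple
with `I_1 > 0` satisfies them. -/
theorem stmt0 (j : ℕ) (hj : 2 ≤ j)
    (f c cv γ Sb Sbv μs μr μts μt : ℝ) (α μ : ℕ → ℝ)
    (hf : 0 < f) (hc : 0 < c) (hcv : 0 < cv) (hγ : 0 < γ)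
    (hSb : 0 < Sb) (hSbv : 0 < Sbv) (hμs : 0 < μs) (hμr : 0 < μr)
    (hμts : 0 < μts) (hμt : 0 < μt)
    (hα : ∀ k, 1 ≤ k → k ≤ j - 1 → 0 < α k)
    (hμ : ∀ k, 1 ≤ k → k ≤ j → 0 < μ k)
    (hμeq : μt = μts)
    (R0 : ℝ)
    (hR0 : R0 = Real.sqrt
      (f ^ 2 * c * cv * Sbv * xiSum j γ α μ / (Sb * μt * (α 1 + μ 1)))) :
    (1 < R0 →
      ((∃ S R St It : ℝ, ∃ I : ℕ → ℝ, 0 < I 1 ∧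
          IsEquilib j f c cv γ Sb Sbv μs μr μts μt α μ S R St It I) ∧
        (∀ S R St It : ℝ, ∀ I : ℕ → ℝ, ∀ S' R' St' It' : ℝ, ∀ I' : ℕ → ℝ,
          0 < I 1 → IsEquilib j f c cv γ Sb Sbv μs μr μts μt α μ S R St It I →
          0 < I' 1 → IsEquilib j f c cv γ Sb Sbv μs μr μts μt α μ S' R' St' It' I' →
          S = S' ∧ R = R' ∧ St = St' ∧ It = It' ∧ ∀ k ∈ Icc 1 j, I k = I' k))) ∧
    (R0 < 1 →
      ¬ ∃ S R St It : ℝ, ∃ I : ℕ → ℝ, 0 < I 1 ∧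
          IsEquilib j f c cv γ Sb Sbv μs μr μts μt α μ S R St It I) := by
  have hξ : 0 < xiSum j γ α μ := xi_pos hj hγ hα hμ
  have hB : 0 < α 1 + μ 1 := add_pos (hα 1 le_rfl (by omega)) (hμ 1 le_rfl (by omega))
  have hD : 0 < Sb * μt * (α 1 + μ 1) := by positivity
  have hE : (0:ℝ) < f^2*c*cv*Sbv*xiSum j γ α μ*(α 1 + μ 1)
      + (α 1 + μ 1)*Sb*μs*f*c*xiSum j γ α μ := by positivity
  constructor
  · intro hR1
    have hAD : Sb*μt*(α 1 + μ 1) < f^2*c*cv*Sbv*xiSum j γ α μ := by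
      rw [hR0] at hR1
      have h1 : (1:ℝ) < f ^ 2 * c * cv * Sbv * xiSum j γ α μ / (Sb * μt * (α 1 + μ 1)) := by
        have h2 := (Real.lt_sqrt (by norm_num : (0:ℝ) ≤ 1)).mp hR1
        simpa using h2
      exact (one_lt_div hD).mp h1
    refine ⟨exist_sol j hj f c cv γ Sb Sbv μs μr μts μt α μ hf hc hcv hγ hSb hSbv
      hμs hμr hμt hα hμ hμeq hAD, ?_⟩
    intro S R St It I S' R' St' It' I' hI1 hIE hI1' hIE'
    obtain ⟨l1, s1, k1, i1, st1, r1⟩ := solution_char j hj f c cv γ Sb Sbv μs μr μts μt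
      α μ hf hc hcv hγ hSb hSbv hμs hμr hμt hα hμ S R St It I hI1 hIE
    obtain ⟨l2, s2, k2, i2, st2, r2⟩ := solution_char j hj f c cv γ Sb Sbv μs μr μts μt
      α μ hf hc hcv hγ hSb hSbv hμs hμr hμt hα hμ S' R' St' It' I' hI1' hIE'
    have hx : I 1 = I' 1 := mul_right_cancel₀ hE.ne' (l1.trans l2.symm)
    refine ⟨?_, ?_, ?_, ?_, ?_⟩
    · rw [s1, s2, hx]
    · rw [r1, r2, hx]
    · rw [st1, st2, i1, i2, hx]
    · rw [i1, i2, hx]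
    · intro k hk
      rw [k1 k hk, k2 k hk, hx]
  · rintro hR1 ⟨S, R, St, It, I, hI1, hIE⟩
    obtain ⟨l1, -⟩ := solution_char j hj f c cv γ Sb Sbv μs μr μts μt
      α μ hf hc hcv hγ hSb hSbv hμs hμr hμt hα hμ S R St It I hI1 hIE
    have hAD : f^2*c*cv*Sbv*xiSum j γ α μ < Sb*μt*(α 1 + μ 1) := by
      rw [hR0] at hR1
      have h1 : f ^ 2 * c * cv * Sbv * xiSum j γ α μ / (Sb * μt * (α 1 + μ 1)) < 1 := by
        have h2 := (Real.sqrt_lt' one_pos).mp hR1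
        simpa using h2
      exact (div_lt_one hD).mp h1
    have hpos : 0 < I 1 * (f^2*c*cv*Sbv*xiSum j γ α μ*(α 1 + μ 1)
      + (α 1 + μ 1)*Sb*μs*f*c*xiSum j γ α μ) := mul_pos hI1 hE
    have hneg : μs*Sb*(f^2*c*cv*Sbv*xiSum j γ α μ - Sb*μt*(α 1 + μ 1)) < 0 := by
      apply mul_neg_of_pos_of_neg (by positivity)
      linarith
    linarith [l1]
end

section
/- Fix j ≥ 2 and positive parameters. Any tuple (S, I_1, …, I_j, R, S̃, Ĩ) with I_1 ≠ 0 satisfying all of the equilibrium equations has I_1 = S̄²·μ_s·μ̃_s·(R_0² − 1)/(f·c·S̄·μ_s·ξ + S̄_v·f²·c·c_v·ξ). -/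
open Finset

/-- Any equilibrium tuple `(S, I_1, …, I_j, R, S̃, Ĩ)` with `I_1 ≠ 0`
has `I_1 = S̄²·μ_s·μ̃_s·(R_0² − 1)/(f·c·S̄·μ_s·ξ + S̄_v·f²·c·c_v·ξ)`. -/
theorem stmt1 (j : ℕ) (hj : 2 ≤ j)
    (f c cv γ Sb Sbv μs μr μts μt : ℝ) (α μ : ℕ → ℝ)
    (hf : 0 < f) (hc : 0 < c) (hcv : 0 < cv) (hγ : 0 < γ)
    (hSb : 0 < Sb) (hSbv : 0 < Sbv) (hμs : 0 < μs) (hμr : 0 < μr)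
    (hμts : 0 < μts) (hμt : 0 < μt)
    (hα : ∀ k, 1 ≤ k → k ≤ j - 1 → 0 < α k)
    (hμ : ∀ k, 1 ≤ k → k ≤ j → 0 < μ k)
    (hμeq : μt = μts)
    (R0sq : ℝ)
    (hR0sq : R0sq = f ^ 2 * c * cv * Sbv * xiSum j γ α μ / (Sb * μt * (α 1 + μ 1)))
    (S R St It : ℝ) (I : ℕ → ℝ) (hI1 : I 1 ≠ 0)
    (heq : IsEquilib j f c cv γ Sb Sbv μs μr μts μt α μ S R St It I) :
    I 1 = Sb ^ 2 * μs * μts * (R0sq - 1) /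
      (f * c * Sb * μs * xiSum j γ α μ + Sbv * f ^ 2 * c * cv * xiSum j γ α μ) := by

  obtain ⟨e1, e2, e3, e4, e5, e6, e7, e8⟩ := heq
  have hA : 0 < α 1 + μ 1 := add_pos (hα 1 le_rfl (by omega)) (hμ 1 le_rfl (by omega))
  have hcc : ∀ l, l ≤ j - 1 → 0 < ccoef j γ α μ l := by
    intro l hl
    unfold ccoef
    split_ifs with h0 h1
    · norm_num
    · exact div_pos (hα _ (by omega) (by omega)) (add_pos hγ (hμ j (by omega) le_rfl))
    · exact div_pos (hα _ (by omega) (by omega))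
        (add_pos (hα _ (by omega) (by omega)) (hμ _ (by omega) (by omega)))
  set ξ := xiSum j γ α μ with hξdef
  have hξ : 0 < ξ := by
    rw [hξdef, xiSum]
    apply Finset.sum_pos
    · intro k hk
      simp only [mem_Icc] at hk
      exact Finset.prod_pos fun l hl => hcc l (by simp only [mem_range] at hl; omega)
    · exact ⟨1, by simp; omega⟩
  have hIk : ∀ k, 1 ≤ k → k ≤ j → I k = (∏ l ∈ range k, ccoef j γ α μ l) * I 1 := by
    intro k
    induction k with
    | zero => omega
    | succ n ih =>
      intro h1 h2
      rcases Nat.lt_or_ge n 1 with h | h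
      · have hn : n = 0 := by omega
        subst hn
        simp [ccoef]
      · have ihn := ih h (by omega)
        have hstep : I (n + 1) = ccoef j γ α μ n * I n := by
          rcases eq_or_lt_of_le h2 with hje | hje
          · have hn : n = j - 1 := by omega
            have hden : (γ + μ j) ≠ 0 := ne_of_gt (add_pos hγ (hμ j (by omega) le_rfl))
            have e4' := e4
            rw [← hn] at e4'
            have hcn : ccoef j γ α μ n = α n / (γ + μ j) := by
              unfold ccoef
              rw [if_neg (by omega), if_pos hn, ← hn]
            rw [hcn]
            have : I (n+1) * (γ + μ j) = α n * I n := by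
              have : j = n + 1 := by omega
              rw [← this]; linarith [e4']
            field_simp
            linarith [this]
          · have he3 := e3 (n + 1) (by omega) (by omega)
            simp only [Nat.add_sub_cancel] at he3
            have hden : (α (n+1) + μ (n+1)) ≠ 0 :=
              ne_of_gt (add_pos (hα _ (by omega) (by omega)) (hμ _ (by omega) (by omega)))
            have hcn : ccoef j γ α μ n = α n / (α (n + 1) + μ (n + 1)) := by
              unfold ccoef
              rw [if_neg (by omega), if_neg (by omega)]
            rw [hcn]
            field_simp
            linarith [he3]
        rw [prod_range_succ, hstep, ihn]; ring
  have hsum : ∑ k ∈ Icc 1 j, I k = ξ * I 1 := by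
    rw [hξdef, xiSum, sum_mul]
    exact Finset.sum_congr rfl fun k hk => by
      simp only [mem_Icc] at hk; exact hIk k hk.1 hk.2
  have hSb' : Sb ≠ 0 := ne_of_gt hSb
  -- vector equations
  have e7' : f * c * St * (ξ * I 1) = μt * (Sbv - St) * Sb := by
    have h := e7
    rw [hsum, e8] at h
    field_simp at h
    linarith [h]
  have hD : f * c * (ξ * I 1) + μt * Sb ≠ 0 := by
    intro hD0
    have h : St * (f * c * (ξ * I 1) + μt * Sb) = μt * Sbv * Sb := by
      linear_combination e7'
    rw [hD0, mul_zero] at h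
    have := mul_pos (mul_pos hμt hSbv) hSb
    linarith
  have hSt : St = Sbv - It := by linarith [e8]
  rw [hSt] at e7'
  have hIt : It * (f * c * (ξ * I 1) + μt * Sb) = Sbv * (f * c * (ξ * I 1)) := by
    linear_combination -e7'
  -- host equations
  have e2' : f * cv * It * S = (α 1 + μ 1) * I 1 * Sb := by
    have h := e2
    field_simp at h
    linarith [h]
  have e1' : S * μs = μs * Sb - (α 1 + μ 1) * I 1 := by
    have h := e1.trans e2
    linarith [h]
  -- main scalar equation
  have e2'' : f * cv * It * (μs * Sb - (α 1 + μ 1) * I 1) = (α 1 + μ 1) * I 1 * Sb * μs := by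
    linear_combination μs * e2' - f * cv * It * e1'
  have E : f ^ 2 * c * cv * Sbv * ξ * (μs * Sb - (α 1 + μ 1) * I 1)
      = (α 1 + μ 1) * Sb * μs * (f * c * ξ * I 1 + μt * Sb) := by
    have key : I 1 * (f ^ 2 * c * cv * Sbv * ξ * (μs * Sb - (α 1 + μ 1) * I 1))
        = I 1 * ((α 1 + μ 1) * Sb * μs * (f * c * ξ * I 1 + μt * Sb)) := by
      linear_combination (f * c * ξ * I 1 + μt * Sb) * e2''
        - f * cv * (μs * Sb - (α 1 + μ 1) * I 1) * hIt
    exact mul_left_cancel₀ hI1 key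
  rw [hR0sq, ← hμeq]
  have hd1 : f * c * Sb * μs * ξ + Sbv * f ^ 2 * c * cv * ξ ≠ 0 := by positivity
  have hd2 : Sb * μt * (α 1 + μ 1) ≠ 0 := by positivity
  rw [eq_div_iff hd1]
  field_simp
  linear_combination (-1 : ℝ) * E
end

section
/- Suppose all infected and recovered host death rates equal the susceptible death rate, i.e. μ_1 = ⋯ = μ_j = μ_r = μ_s. If differentiable functions S, I_1, …, I_j, R, Ĩ : ℝ → ℝ satisfy the host equations of the model and the total host population N = S + Σ_{k=1}^j I_k + R satisfies N(0) = S̄, then N(t) = S̄ for all t ≥ 0; that is, the manifold N = S̄ is invariant. -/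
open Finset

/-- Telescoping sum over `Icc 1 j`. -/
lemma tele_aux (g : ℕ → ℝ) : ∀ j : ℕ, 1 ≤ j →
    ∑ k ∈ Icc 1 j, (g (k - 1) - g k) = g 0 - g j := by
  intro j hj
  induction j, hj using Nat.le_induction with
  | base => simp
  | succ n hn ih =>
    rw [Finset.sum_Icc_succ_top (by omega), ih]
    have h : n + 1 - 1 = n := by omega
    rw [h]; ring

/-- If all infected and recovered host death rates equal the
susceptible death rate `μ_s`, and differentiable functions `S, I_1, …, I_j, R, Ĩ`
satisfy the host equations of the relapsing model with total host population
`N = S + Σ_{k=1}^j I_k + R` satisfying `N(0) = S̄`, then `N(t) = S̄` for all `t ≥ 0`;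
that is, the manifold `N = S̄` is invariant. -/
theorem stmt4 (j : ℕ) (hj : 2 ≤ j)
    (f cv γ β1 Sb μs μr : ℝ) (α μ : ℕ → ℝ)
    (hf : 0 < f) (hcv : 0 < cv) (hγ : 0 < γ) (hβ1 : 0 < β1) (hSb : 0 < Sb)
    (hμs : 0 < μs) (hμr : 0 < μr)
    (hα : ∀ k, 1 ≤ k → k ≤ j - 1 → 0 < α k)
    (hμpos : ∀ k, 1 ≤ k → k ≤ j → 0 < μ k)
    (hβμ : μs < β1)
    (heq : ∀ k, 1 ≤ k → k ≤ j → μ k = μs) (heqr : μr = μs)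
    (S R It : ℝ → ℝ) (I : ℕ → ℝ → ℝ)
    (hIt : Differentiable ℝ It)
    (N : ℝ → ℝ) (hN : ∀ t, N t = S t + (∑ k ∈ Icc 1 j, I k t) + R t)
    (hNpos : ∀ t, 0 < N t)
    (hS : ∀ t, HasDerivAt S
      ((β1 * N t - (β1 - μs) / Sb * N t ^ 2) - f * cv * It t * S t / N t - μs * S t) t)
    (hI1 : ∀ t, HasDerivAt (I 1)
      (f * cv * It t * S t / N t - (α 1 + μ 1) * I 1 t) t)
    (hIk : ∀ k, 2 ≤ k → k ≤ j - 1 → ∀ t, HasDerivAt (I k)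
      (α (k - 1) * I (k - 1) t - (α k + μ k) * I k t) t)
    (hIj : ∀ t, HasDerivAt (I j)
      (α (j - 1) * I (j - 1) t - (γ + μ j) * I j t) t)
    (hR : ∀ t, HasDerivAt R (γ * I j t - μr * R t) t)
    (hN0 : N 0 = Sb) :
    ∀ t : ℝ, 0 ≤ t → N t = Sb := by
  set c : ℝ := (β1 - μs) / Sb with hc
  -- derivative of each infected compartment
  set dI : ℕ → ℝ → ℝ := fun k t =>
    if k = 1 then f * cv * It t * S t / N t - (α 1 + μ 1) * I 1 t
    else if k = j then α (j - 1) * I (j - 1) t - (γ + μ j) * I j t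
    else α (k - 1) * I (k - 1) t - (α k + μ k) * I k t with hdI
  have hDI : ∀ t, ∀ k ∈ Icc 1 j, HasDerivAt (I k) (dI k t) t := by
    intro t k hk
    simp only [mem_Icc] at hk
    rcases eq_or_ne k 1 with h1 | h1
    · subst h1; simpa [hdI] using hI1 t
    · rcases eq_or_ne k j with h2 | h2
      · subst h2; simpa [hdI, h1] using hIj t
      · have := hIk k (by omega) (by omega) t
        simpa [hdI, h1, h2] using this
  -- value of the sum of these derivatives
  have hsumval : ∀ t, ∑ k ∈ Icc 1 j, dI k t =
      f * cv * It t * S t / N t - γ * I j t - μs * ∑ k ∈ Icc 1 j, I k t := by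
    intro t
    set X : ℝ := f * cv * It t * S t / N t with hX
    set g : ℕ → ℝ := fun k =>
      if k = 0 then X else if k = j then γ * I j t else α k * I k t with hg
    have hterm : ∀ k ∈ Icc 1 j, dI k t = (g (k - 1) - g k) - μs * I k t := by
      intro k hk
      simp only [mem_Icc] at hk
      rcases eq_or_ne k 1 with h1 | h1
      · subst h1
        have hμ1 : μ 1 = μs := heq 1 le_rfl (by omega)
        have e1 : dI 1 t = X - (α 1 + μ 1) * I 1 t := by simp [hdI, hX]
        have e2 : g 0 = X := by simp [hg]
        have e3 : g 1 = α 1 * I 1 t := by simp [hg, show (1:ℕ) ≠ j by omega]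
        have h11 : (1:ℕ) - 1 = 0 := rfl
        rw [h11, e1, e2, e3, hμ1]; ring
      · rcases eq_or_ne k j with h2 | h2
        · have hμj : μ j = μs := heq j (by omega) le_rfl
          have hj1 : j - 1 ≠ 0 := by omega
          have hj2 : j - 1 ≠ j := by omega
          rw [h2]
          have e1 : dI j t = α (j - 1) * I (j - 1) t - (γ + μ j) * I j t := by
            simp [hdI, show j ≠ 1 by omega]
          have e2 : g (j - 1) = α (j - 1) * I (j - 1) t := by simp [hg, hj1, hj2]
          have e3 : g j = γ * I j t := by simp [hg, show j ≠ 0 by omega]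
          rw [e1, e2, e3, hμj]; ring
        · have hμk : μ k = μs := heq k (by omega) (by omega)
          have hk0 : k ≠ 0 := by omega
          have hk10 : k - 1 ≠ 0 := by omega
          have hk1j : k - 1 ≠ j := by omega
          have e1 : dI k t = α (k - 1) * I (k - 1) t - (α k + μ k) * I k t := by
            simp [hdI, h1, h2]
          have e2 : g (k - 1) = α (k - 1) * I (k - 1) t := by simp [hg, hk10, hk1j]
          have e3 : g k = α k * I k t := by simp [hg, hk0, h2]
          rw [e1, e2, e3, hμk]; ring
    rw [Finset.sum_congr rfl hterm, Finset.sum_sub_distrib,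
      tele_aux g j (by omega), ← Finset.mul_sum]
    have hj0 : j ≠ 0 := by omega
    have h0 : g 0 = X := by simp [hg]
    have hgj : g j = γ * I j t := by simp [hg, hj0]
    rw [h0, hgj]
  -- derivative of N
  have key : ∀ t, HasDerivAt N (c * N t * (Sb - N t)) t := by
    intro t
    have hsumD : HasDerivAt (fun t => ∑ k ∈ Icc 1 j, I k t)
        (∑ k ∈ Icc 1 j, dI k t) t := HasDerivAt.fun_sum (hDI t)
    have hNfun : N = fun t => S t + (∑ k ∈ Icc 1 j, I k t) + R t := funext hN
    have hD : HasDerivAt N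
        (((β1 * N t - c * N t ^ 2) - f * cv * It t * S t / N t - μs * S t)
          + (∑ k ∈ Icc 1 j, dI k t) + (γ * I j t - μr * R t)) t := by
      have hD' := ((hS t).fun_add hsumD).fun_add (hR t)
      rwa [← hNfun] at hD'
    have hval : ((β1 * N t - c * N t ^ 2) - f * cv * It t * S t / N t - μs * S t)
          + (∑ k ∈ Icc 1 j, dI k t) + (γ * I j t - μr * R t)
        = c * N t * (Sb - N t) := by
      rw [hsumval t, heqr]
      have hcSb : c * Sb = β1 - μs := div_mul_cancel₀ _ hSb.ne'
      have hn := hN t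
      linear_combination μs * hn - N t * hcSb
    rwa [hval] at hD
  -- integrating factor
  have hNdiff : Differentiable ℝ N := fun t => (key t).differentiableAt
  have hq : Continuous (fun t => c * N t) := continuous_const.mul hNdiff.continuous
  set E : ℝ → ℝ := fun t => ∫ s in (0:ℝ)..t, c * N s with hE
  have hEd : ∀ t, HasDerivAt E (c * N t) t := by
    intro t
    exact intervalIntegral.integral_hasDerivAt_right (hq.intervalIntegrable 0 t)
      (hq.stronglyMeasurableAtFilter _ _) hq.continuousAt
  set w : ℝ → ℝ := fun t => (N t - Sb) * Real.exp (E t) with hw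
  have hwd : ∀ t, HasDerivAt w 0 t := by
    intro t
    have h1 : HasDerivAt (fun t => N t - Sb) (c * N t * (Sb - N t)) t :=
      (key t).sub_const Sb
    have h2 : HasDerivAt (fun t => Real.exp (E t)) (Real.exp (E t) * (c * N t)) t :=
      (hEd t).exp
    have h3 : HasDerivAt w (c * N t * (Sb - N t) * Real.exp (E t) + (N t - Sb) * (Real.exp (E t) * (c * N t))) t := h1.mul h2
    convert h3 using 1
    ring
  have hconst := is_const_of_deriv_eq_zero
    (fun t => (hwd t).differentiableAt) (fun t => (hwd t).deriv)
  intro t _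
  have h0 : w 0 = 0 := by simp [hw, hN0]
  have ht : w t = 0 := (hconst t 0).trans h0
  have := mul_eq_zero.mp ht
  rcases this with h | h
  · linarith
  · exact absurd h (Real.exp_ne_zero _)
end

section
/- The characteristic polynomial of the matrix product W·V⁻¹ equals X^{j+1} − (ρ·k·δ₁/b̃)·X^{j−1}, where δ₁ = Σ_{m=1}^{j} Π_{l=1}^{m} q_{l−1}/(q_l + b_l). Consequently the nonzero eigenvalues of W·V⁻¹ are λ = ±√(ρ·k·δ₁/b̃). -/
open Finset Polynomial

section Aux

open Matrix

lemma spec_iff_root_aux (n : ℕ) (M : Matrix (Fin n) (Fin n) ℝ) (lam : ℝ) :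
    lam ∈ spectrum ℝ M ↔ M.charpoly.eval lam = 0 := by
  have h1 : M.charpoly.eval lam = ((charmatrix M).map (Polynomial.eval lam)).det := by
    rw [Matrix.charpoly, ← Polynomial.coe_evalRingHom, RingHom.map_det]
    rfl
  have h2 : (charmatrix M).map (Polynomial.eval lam) = algebraMap ℝ _ lam - M := by
    ext i l
    by_cases h : i = l <;>
      simp [h, charmatrix_apply_eq, charmatrix_apply_ne, Matrix.algebraMap_matrix_apply,
        Matrix.sub_apply, Matrix.one_apply]
  rw [spectrum.mem_iff, ← h2, Matrix.isUnit_iff_isUnit_det, ← h1, isUnit_iff_ne_zero, not_ne_iff]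

lemma charpoly_special_aux (n : ℕ) (hn : 1 ≤ n) (a : ℝ) (v : ℕ → ℝ)
    (N : Matrix (Fin (n+1)) (Fin (n+1)) ℝ)
    (hN : N = Matrix.of fun i c : Fin (n+1) =>
      if (i:ℕ) = 0 ∧ (c:ℕ) = n then a
      else if (i:ℕ) = n ∧ (c:ℕ) < n then v (c:ℕ) else 0) :
    N.charpoly = X ^ (n+1) - C (a * v 0) * X ^ (n-1) := by
  classical
  set z : Fin (n+1) := 0 with hz
  set e : Fin (n+1) := Fin.last n with he
  have hzv : (z : ℕ) = 0 := rfl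
  have hev : (e : ℕ) = n := rfl
  have hze : z ≠ e := by
    simp only [ne_eq, Fin.ext_iff, hzv, hev]
    omega
  set τ : Equiv.Perm (Fin (n+1)) := Equiv.swap z e with hτ
  have hτ1 : (1 : Equiv.Perm (Fin (n+1))) ≠ τ := by
    intro h
    have : (1 : Equiv.Perm (Fin (n+1))) z = τ z := by rw [h]
    simp only [hτ, Equiv.Perm.coe_one, id_eq, Equiv.swap_apply_left] at this
    exact hze this
  have hdiag : ∀ i : Fin (n+1), N i i = 0 := by
    intro i
    simp only [hN, Matrix.of_apply]
    split_ifs with h1 h2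
    · omega
    · omega
    · rfl
  have hmid : ∀ i c : Fin (n+1), (i:ℕ) ≠ 0 → (i:ℕ) ≠ n → N i c = 0 := by
    intro i c h1 h2
    simp only [hN, Matrix.of_apply]
    split_ifs with g1 g2 <;> first | omega | rfl
  have hcases : ∀ i : Fin (n+1), i = z ∨ i = e ∨ ((i:ℕ) ≠ 0 ∧ (i:ℕ) ≠ n) := by
    intro i
    by_cases h0 : (i:ℕ) = 0
    · exact Or.inl (Fin.ext (by rw [h0, hzv]))
    by_cases hn' : (i:ℕ) = n
    · exact Or.inr (Or.inl (Fin.ext (by rw [hn', hev])))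
    · exact Or.inr (Or.inr ⟨h0, hn'⟩)
  have key : ∀ σ : Equiv.Perm (Fin (n+1)), σ ≠ 1 → σ ≠ τ →
      ∃ i, charmatrix N (σ i) i = 0 := by
    intro σ h1 h2
    by_cases hfix : ∀ r : Fin (n+1), (r:ℕ) ≠ 0 → (r:ℕ) ≠ n → σ r = r
    · exfalso
      have hmv : ∀ x : Fin (n+1), ((x:ℕ) = 0 ∨ (x:ℕ) = n) → σ x = z ∨ σ x = e := by
        intro x hx
        rcases hcases (σ x) with h | h | h
        · exact Or.inl h
        · exact Or.inr h
        · exfalso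
          have h5 : σ x = x := σ.injective (hfix (σ x) h.1 h.2)
          rw [h5] at h
          rcases hx with hx | hx
          · exact h.1 hx
          · exact h.2 hx
      have hσz := hmv z (Or.inl hzv)
      have hσe := hmv e (Or.inr hev)
      rcases hσz with hsz | hsz <;> rcases hσe with hse | hse
      · exact absurd (σ.injective (hsz.trans hse.symm)) hze
      · exact h1 (Equiv.ext fun i => by
          simp only [Equiv.Perm.coe_one, id_eq]
          rcases hcases i with hi | hi | hi
          · rw [hi, hsz]
          · rw [hi, hse]
          · exact hfix i hi.1 hi.2)
      · exact h2 (Equiv.ext fun i => by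
          rcases hcases i with hi | hi | hi
          · rw [hi, hsz, hτ, Equiv.swap_apply_left]
          · rw [hi, hse, hτ, Equiv.swap_apply_right]
          · have hiz : i ≠ z := fun hc => hi.1 (by rw [hc, hzv])
            have hie : i ≠ e := fun hc => hi.2 (by rw [hc, hev])
            rw [hfix i hi.1 hi.2, hτ, Equiv.swap_apply_of_ne_of_ne hiz hie])
      · exact absurd (σ.injective (hsz.trans hse.symm)) hze
    · push_neg at hfix
      obtain ⟨r, hr0, hrn, hr⟩ := hfix
      refine ⟨σ.symm r, ?_⟩
      have hne2 : r ≠ σ.symm r := by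
        intro h
        exact hr (by rw [Equiv.eq_symm_apply] at h; exact h)
      have h3 : charmatrix N (σ (σ.symm r)) (σ.symm r) = charmatrix N r (σ.symm r) := by
        rw [Equiv.apply_symm_apply]
      rw [h3, charmatrix_apply_ne _ _ _ hne2, hmid r _ hr0 hrn, map_zero, neg_zero]
  rw [Matrix.charpoly, Matrix.det_apply]
  have hsub : ({1, τ} : Finset (Equiv.Perm (Fin (n+1)))) ⊆ univ := subset_univ _
  rw [← Finset.sum_subset hsub (fun σ _ hσ => ?_)]
  swap
  · simp only [Finset.mem_insert, Finset.mem_singleton, not_or] at hσ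
    obtain ⟨i, hi⟩ := key σ hσ.1 hσ.2
    exact smul_eq_zero_of_right _ (Finset.prod_eq_zero (Finset.mem_univ i) hi)
  rw [Finset.sum_pair hτ1]
  have hterm1 : ∀ i : Fin (n+1), charmatrix N ((1 : Equiv.Perm (Fin (n+1))) i) i = X := by
    intro i
    show charmatrix N i i = X
    rw [charmatrix_apply_eq, hdiag i, map_zero, sub_zero]
  have hprod1 : (∏ i, charmatrix N ((1 : Equiv.Perm (Fin (n+1))) i) i) = X ^ (n+1) := by
    rw [Finset.prod_congr rfl fun i _ => hterm1 i, Finset.prod_const, card_univ, Fintype.card_fin]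
  have hNez : N e z = v 0 := by
    simp only [hN, Matrix.of_apply]
    split_ifs with h1 h2
    · exfalso; rw [hev] at h1; omega
    · rfl
    · exact absurd ⟨hev, by rw [hzv]; omega⟩ h2
  have hNze : N z e = a := by
    simp only [hN, Matrix.of_apply]
    split_ifs with h1 h2
    · rfl
    · exact absurd ⟨hzv, hev⟩ h1
    · exact absurd ⟨hzv, hev⟩ h1
  have hpairsub : ({z, e} : Finset (Fin (n+1))) ⊆ univ := subset_univ _
  have hprod2 : (∏ i, charmatrix N (τ i) i) = X ^ (n-1) * (C (v 0) * C a) := by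
    rw [← Finset.prod_sdiff hpairsub]
    have hrest : (∏ i ∈ univ \ {z, e}, charmatrix N (τ i) i) = X ^ (n-1) := by
      have hcong : ∀ i ∈ univ \ ({z, e} : Finset (Fin (n+1))), charmatrix N (τ i) i = X := by
        intro i hi
        simp only [Finset.mem_sdiff, Finset.mem_insert, Finset.mem_singleton, not_or] at hi
        rw [hτ, Equiv.swap_apply_of_ne_of_ne hi.2.1 hi.2.2, charmatrix_apply_eq, hdiag i,
          map_zero, sub_zero]
      rw [Finset.prod_congr rfl hcong, Finset.prod_const, Finset.card_sdiff_of_subset hpairsub,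
        card_univ, Fintype.card_fin, Finset.card_pair hze]
      have h21 : n + 1 - 2 = n - 1 := by omega
      rw [h21]
    have hp : (∏ i ∈ ({z, e} : Finset (Fin (n+1))), charmatrix N (τ i) i)
        = C (v 0) * C a := by
      rw [Finset.prod_pair hze]
      have t1 : charmatrix N (τ z) z = -C (v 0) := by
        rw [hτ, Equiv.swap_apply_left, charmatrix_apply_ne _ _ _ hze.symm, hNez]
      have t2 : charmatrix N (τ e) e = -C a := by
        rw [hτ, Equiv.swap_apply_right, charmatrix_apply_ne _ _ _ hze, hNze]
      rw [t1, t2, neg_mul_neg]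
    rw [hrest, hp]
  rw [hprod1, hprod2]
  have hsign1 : Equiv.Perm.sign (1 : Equiv.Perm (Fin (n+1))) = 1 := by simp
  have hsignτ : Equiv.Perm.sign τ = -1 := Equiv.Perm.sign_swap hze
  rw [hsign1, hsignτ, one_smul, Units.neg_smul, one_smul, C_mul]
  ring

noncomputable def yAux (q b : ℕ → ℝ) (j c : ℕ) : ℝ :=
  (∑ m ∈ Icc (c+1) j, ∏ l ∈ Icc (c+1) m, q (l - 1) / (q l + b l)) / q c

lemma yAux_split (q b : ℕ → ℝ) (j c : ℕ) (hc : c + 1 ≤ j) :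
    (∑ m ∈ Icc (c+1) j, ∏ l ∈ Icc (c+1) m, q (l - 1) / (q l + b l))
      = q c / (q (c+1) + b (c+1)) *
        (1 + ∑ m ∈ Icc (c+2) j, ∏ l ∈ Icc (c+2) m, q (l - 1) / (q l + b l)) := by
  have hins : Icc (c+1) j = insert (c+1) (Icc (c+2) j) := by
    ext m; simp only [Finset.mem_Icc, Finset.mem_insert]; omega
  rw [hins, Finset.sum_insert (by simp [Finset.mem_Icc])]
  have h1 : (∏ l ∈ Icc (c+1) (c+1), q (l-1)/(q l + b l)) = q c / (q (c+1) + b (c+1)) := by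
    rw [Finset.Icc_self, Finset.prod_singleton, Nat.add_sub_cancel]
  have h2 : ∀ m ∈ Icc (c+2) j, (∏ l ∈ Icc (c+1) m, q (l-1)/(q l + b l))
      = q c / (q (c+1) + b (c+1)) * ∏ l ∈ Icc (c+2) m, q (l-1)/(q l + b l) := by
    intro m hm
    rw [Finset.mem_Icc] at hm
    have hins2 : Icc (c+1) m = insert (c+1) (Icc (c+2) m) := by
      ext l; simp only [Finset.mem_Icc, Finset.mem_insert]; omega
    rw [hins2, Finset.prod_insert (by simp [Finset.mem_Icc]), Nat.add_sub_cancel]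
  rw [Finset.sum_congr rfl h2, ← Finset.mul_sum, h1]
  ring

end Aux

/-- The characteristic polynomial of the next-generation matrix `W·V⁻¹`
of the relapsing host–vector model equals `X^{j+1} − (ρ·k·δ₁/b̃)·X^{j−1}`, where
`δ₁ = Σ_{m=1}^{j} Π_{l=1}^{m} q_{l−1}/(q_l + b_l)`; consequently its nonzero eigenvalues
are `λ = ±√(ρ·k·δ₁/b̃)`.  (Rows/columns are 0-indexed: index `i : Fin (j+1)` corresponds
to the 1-indexed row `i+1` of the paper.) -/
theorem stmt6 (j : ℕ) (hj : 1 ≤ j) (q b : ℕ → ℝ) (bt k ρ : ℝ)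
    (hq0 : q 0 = 1) (hqj : q j = 1)
    (hq : ∀ l, 1 ≤ l → l ≤ j - 1 → 0 < q l)
    (hb : ∀ l, 1 ≤ l → l ≤ j → 0 < b l)
    (hbt : 0 < bt) (hk : 0 < k) (hρ : 0 < ρ)
    (V W : Matrix (Fin (j + 1)) (Fin (j + 1)) ℝ)
    (hV : V = Matrix.of fun i l : Fin (j + 1) =>
      if i = l then (if (i : ℕ) < j then q ((i : ℕ) + 1) + b ((i : ℕ) + 1) else bt)
      else if (i : ℕ) = (l : ℕ) + 1 ∧ (i : ℕ) < j then -q ((l : ℕ) + 1)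
      else 0)
    (hW : W = Matrix.of fun i l : Fin (j + 1) =>
      if (i : ℕ) = 0 ∧ (l : ℕ) = j then k
      else if (i : ℕ) = j ∧ (l : ℕ) < j then ρ
      else 0) :
    (W * V⁻¹).charpoly =
        X ^ (j + 1) -
          C (ρ * k * (∑ m ∈ Icc 1 j, ∏ l ∈ Icc 1 m, q (l - 1) / (q l + b l)) / bt) *
            X ^ (j - 1) ∧
    ∀ lam : ℝ, lam ≠ 0 →
      (lam ∈ spectrum ℝ (W * V⁻¹) ↔
        lam = Real.sqrt (ρ * k * (∑ m ∈ Icc 1 j, ∏ l ∈ Icc 1 m, q (l - 1) / (q l + b l)) / bt) ∨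
        lam = -Real.sqrt (ρ * k * (∑ m ∈ Icc 1 j, ∏ l ∈ Icc 1 m, q (l - 1) / (q l + b l)) / bt)) := by
  classical
  have hqpos : ∀ l, l ≤ j → 0 < q l := by
    intro l hl
    rcases Nat.eq_zero_or_pos l with h0 | h0
    · rw [h0, hq0]; norm_num
    rcases eq_or_lt_of_le hl with h | h
    · rw [h, hqj]; norm_num
    · exact hq l h0 (by omega)
  have hqbpos : ∀ l, 1 ≤ l → l ≤ j → 0 < q l + b l := fun l h1 h2 =>
    add_pos (hqpos l h2) (hb l h1 h2)
  -- abbreviations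
  set y : ℕ → ℝ := yAux q b j with hy
  have hyc : ∀ c, y c =
      (∑ m ∈ Icc (c+1) j, ∏ l ∈ Icc (c+1) m, q (l - 1) / (q l + b l)) / q c := fun c => rfl
  set δ : ℝ := ∑ m ∈ Icc 1 j, ∏ l ∈ Icc 1 m, q (l - 1) / (q l + b l) with hδ
  have hy0 : y 0 = δ := by
    rw [hyc 0, hq0, hδ, div_one]
  have hytop : y (j-1) * (q j + b j) = 1 := by
    have hj1 : j - 1 + 1 = j := by omega
    rw [hyc (j-1), hj1, Finset.Icc_self, Finset.sum_singleton, Finset.Icc_self,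
      Finset.prod_singleton]
    have hq1 : q (j-1) ≠ 0 := ne_of_gt (hqpos _ (by omega))
    have hq2 : q j + b j ≠ 0 := ne_of_gt (hqbpos j hj le_rfl)
    field_simp
  have hyrec : ∀ c, c + 1 < j → y c * (q (c+1) + b (c+1)) - q (c+1) * y (c+1) = 1 := by
    intro c hc
    have hqc : q c ≠ 0 := ne_of_gt (hqpos c (by omega))
    have hqc1 : q (c+1) ≠ 0 := ne_of_gt (hqpos (c+1) (by omega))
    have hqb : q (c+1) + b (c+1) ≠ 0 := ne_of_gt (hqbpos (c+1) (by omega) (by omega))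
    rw [hyc c, hyc (c+1), yAux_split q b j c (by omega)]
    field_simp
    ring
  -- V is lower triangular with nonzero diagonal
  have hVtri : V.BlockTriangular OrderDual.toDual := by
    intro i l h
    have hil : (i : Fin (j+1)) < l := h
    rw [hV]
    simp only [Matrix.of_apply]
    rw [if_neg (by intro hc; rw [hc] at hil; exact lt_irrefl _ hil),
      if_neg (by rintro ⟨hc, -⟩; rw [Fin.lt_def] at hil; omega)]
  have hdetV : V.det = ∏ i, V i i := Matrix.det_of_lowerTriangular V hVtri
  have hVunit : IsUnit V.det := by
    rw [hdetV]
    apply isUnit_iff_ne_zero.mpr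
    apply Finset.prod_ne_zero_iff.mpr
    intro i _
    have hVii : V i i = if (i:ℕ) < j then q ((i:ℕ)+1) + b ((i:ℕ)+1) else bt := by
      rw [hV]; simp
    rw [hVii]
    by_cases h : (i:ℕ) < j
    · rw [if_pos h]; exact ne_of_gt (hqbpos ((i:ℕ)+1) (by omega) (by omega))
    · rw [if_neg h]; exact ne_of_gt hbt
  -- the explicit product matrix
  set N : Matrix (Fin (j+1)) (Fin (j+1)) ℝ := Matrix.of (fun i c : Fin (j+1) =>
    if (i:ℕ) = 0 ∧ (c:ℕ) = j then k/bt
    else if (i:ℕ) = j ∧ (c:ℕ) < j then ρ * y (c:ℕ) else 0) with hN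
  have hNV : N * V = W := by
    ext i c
    rw [Matrix.mul_apply, hW]
    simp only [Matrix.of_apply]
    by_cases hi0 : (i:ℕ) = 0
    · -- row 0
      have hsum : ∀ l : Fin (j+1), l ≠ Fin.last j → N i l * V l c = 0 := by
        intro l hl
        have hNil : N i l = 0 := by
          simp only [hN, Matrix.of_apply]
          rw [if_neg, if_neg]
          · intro hcond; omega
          · intro hcond
            exact hl (Fin.ext (by rw [hcond.2, Fin.val_last]))
        rw [hNil, zero_mul]
      rw [Finset.sum_eq_single (Fin.last j) (fun l _ hl => hsum l hl)
        (fun h => absurd (Finset.mem_univ _) h)]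
      have hNil : N i (Fin.last j) = k / bt := by
        simp only [hN, Matrix.of_apply]
        rw [if_pos ⟨hi0, Fin.val_last j⟩]
      rw [hNil, hV]
      simp only [Matrix.of_apply]
      by_cases hc : c = Fin.last j
      · rw [hc, if_pos rfl, if_neg (by simp [Fin.val_last]),
          if_pos ⟨hi0, by rw [Fin.val_last]⟩, div_mul_cancel₀ _ (ne_of_gt hbt)]
      · rw [if_neg (fun hcc => hc hcc.symm),
          if_neg (by rintro ⟨-, hcond⟩; rw [Fin.val_last] at hcond; omega),
          if_neg (by rintro ⟨-, hcond⟩; exact hc (Fin.ext (by rw [hcond, Fin.val_last]))),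
          if_neg (by rintro ⟨hcond, -⟩; omega), mul_zero]
    · by_cases hij : (i:ℕ) = j
      · -- row j
        by_cases hcj : (c:ℕ) < j
        · -- column c < j
          have hc1lt : (c:ℕ) + 1 < j + 1 := by omega
          set c1 : Fin (j+1) := ⟨(c:ℕ)+1, hc1lt⟩ with hc1
          have hcc1 : c ≠ c1 := by
            intro h
            have := congrArg Fin.val h
            simp only [hc1] at this
            omega
          have hzero : ∀ l ∈ (univ : Finset (Fin (j+1))), l ∉ ({c, c1} : Finset (Fin (j+1))) →
              N i l * V l c = 0 := by
            intro l _ hl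
            simp only [Finset.mem_insert, Finset.mem_singleton, not_or] at hl
            have hVlc : V l c = 0 := by
              rw [hV]
              simp only [Matrix.of_apply]
              rw [if_neg (fun hc => hl.1 hc), if_neg]
              rintro ⟨hcond, -⟩
              exact hl.2 (Fin.ext (by rw [hcond]))
            rw [hVlc, mul_zero]
          rw [← Finset.sum_subset (Finset.subset_univ {c, c1}) hzero, Finset.sum_pair hcc1]
          have hNic : N i c = ρ * y (c:ℕ) := by
            simp only [hN, Matrix.of_apply]
            rw [if_neg (by intro hcond; omega), if_pos ⟨hij, hcj⟩]
          have hVcc : V c c = q ((c:ℕ)+1) + b ((c:ℕ)+1) := by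
            rw [hV]; simp [hcj]
          rw [hNic, hVcc]
          rw [if_neg (by intro hcond; omega), if_pos ⟨hij, hcj⟩]
          by_cases hc1j : (c:ℕ) + 1 < j
          · have hNic1 : N i c1 = ρ * y ((c:ℕ)+1) := by
              simp only [hN, Matrix.of_apply]
              rw [if_neg (by intro hcond; omega), if_pos ⟨hij, hc1j⟩]
            have hVc1c : V c1 c = -q ((c:ℕ)+1) := by
              rw [hV, Matrix.of_apply]
              rw [if_neg (fun h => hcc1 h.symm), if_pos ⟨rfl, hc1j⟩]
            rw [hNic1, hVc1c]
            linear_combination ρ * hyrec (c:ℕ) hc1j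
          · have hc1j' : (c:ℕ) + 1 = j := by omega
            have hVc1c : V c1 c = 0 := by
              rw [hV]; simp only [Matrix.of_apply]
              rw [if_neg (fun h => hcc1 h.symm), if_neg (by rintro ⟨-, hcond⟩; exact absurd hcond (by show ¬ ((c:ℕ)+1 < j); omega))]
            rw [hVc1c, mul_zero, add_zero, hc1j']
            have hcval : (c:ℕ) = j - 1 := by omega
            rw [hcval]
            linear_combination ρ * hytop
        · -- column j
          have hcj' : (c:ℕ) = j := by omega
          rw [if_neg (by intro hcond; omega), if_neg (by intro hcond; omega)]
          apply Finset.sum_eq_zero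
          intro l _
          by_cases hlj : (l:ℕ) < j
          · have hVlc : V l c = 0 := by
              rw [hV]; simp only [Matrix.of_apply]
              rw [if_neg, if_neg]
              · rintro ⟨hcond, -⟩; omega
              · intro hc; rw [hc] at hlj; omega
            rw [hVlc, mul_zero]
          · have hNil : N i l = 0 := by
              simp only [hN, Matrix.of_apply]
              rw [if_neg (by intro hcond; omega), if_neg (by intro hcond; omega)]
            rw [hNil, zero_mul]
      · -- middle rows
        rw [if_neg (by intro hcond; omega), if_neg (by intro hcond; omega)]
        apply Finset.sum_eq_zero
        intro l _
        have hNil : N i l = 0 := by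
          simp only [hN, Matrix.of_apply]
          rw [if_neg (by intro hcond; omega), if_neg (by intro hcond; omega)]
        rw [hNil, zero_mul]
  have hWV : W * V⁻¹ = N := by
    rw [← hNV, Matrix.mul_assoc, Matrix.mul_nonsing_inv V hVunit, Matrix.mul_one]
  have hcp : (W * V⁻¹).charpoly = X ^ (j+1) - C ((k/bt) * (ρ * y 0)) * X ^ (j-1) := by
    rw [hWV]
    exact charpoly_special_aux j hj (k/bt) (fun c => ρ * y c) N hN
  have hconst : (k/bt) * (ρ * y 0) = ρ * k * δ / bt := by
    rw [hy0]; field_simp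
  have hδpos : 0 < δ := by
    rw [hδ]
    apply Finset.sum_pos
    · intro m hm
      rw [Finset.mem_Icc] at hm
      apply Finset.prod_pos
      intro l hl
      rw [Finset.mem_Icc] at hl
      exact div_pos (hqpos (l-1) (by omega)) (hqbpos l (by omega) (by omega))
    · exact Finset.nonempty_Icc.mpr hj
  have hcpos : 0 < ρ * k * δ / bt := by positivity
  constructor
  · rw [hcp, hconst]
  · intro lam hlam
    rw [spec_iff_root_aux, hcp, hconst]
    simp only [eval_sub, eval_pow, eval_mul, eval_C, eval_X]
    have hpow : lam ^ (j+1) = lam ^ (j-1) * lam ^ 2 := by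
      rw [← pow_add]; congr 1; omega
    have hne : lam ^ (j-1) ≠ 0 := pow_ne_zero _ hlam
    rw [hpow]
    constructor
    · intro h
      have h2 : lam ^ (j-1) * (lam ^ 2 - ρ * k * δ / bt) = 0 := by ring_nf; ring_nf at h; linarith
      have h3 : lam ^ 2 = ρ * k * δ / bt := by
        rcases mul_eq_zero.mp h2 with h4 | h4
        · exact absurd h4 hne
        · linarith
      have h5 : lam ^ 2 = Real.sqrt (ρ * k * δ / bt) ^ 2 := by
        rw [Real.sq_sqrt hcpos.le, h3]
      exact sq_eq_sq_iff_eq_or_eq_neg.mp h5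
    · intro h
      have h3 : lam ^ 2 = ρ * k * δ / bt := by
        rcases h with h | h <;> rw [h] <;>
          simp [neg_pow, Real.sq_sqrt hcpos.le]
      rw [h3]; ring
end

section
/- Let n ≥ 2 and let M be an n×n real matrix all of whose rows other than the first and the last are zero. Then for every real λ, det(M − λ·I) = (−λ)^{n−2}·[(M_{1,1} − λ)·(M_{n,n} − λ) − M_{1,n}·M_{n,1}]. -/
/-- If all rows of an `n×n` real matrix other than the first and the
last are zero, then `det(M − λI) = (−λ)^{n−2}·[(M₁₁ − λ)(Mₙₙ − λ) − M₁ₙ·Mₙ₁]`. -/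
theorem stmt7 (n : ℕ) (hn : 2 ≤ n) (M : Matrix (Fin n) (Fin n) ℝ)
    (hM : ∀ i : Fin n, 1 ≤ (i : ℕ) → (i : ℕ) ≤ n - 2 → ∀ l, M i l = 0) :
    ∀ lam : ℝ,
      (M - lam • (1 : Matrix (Fin n) (Fin n) ℝ)).det =
        (-lam) ^ (n - 2) *
          ((M ⟨0, by omega⟩ ⟨0, by omega⟩ - lam) *
              (M ⟨n - 1, by omega⟩ ⟨n - 1, by omega⟩ - lam) -
            M ⟨0, by omega⟩ ⟨n - 1, by omega⟩ * M ⟨n - 1, by omega⟩ ⟨0, by omega⟩) := by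
  intro lam
  set a : Fin n := ⟨0, by omega⟩ with ha
  set b : Fin n := ⟨n - 1, by omega⟩ with hb
  have hab : a ≠ b := by
    simp only [ha, hb, Fin.ne_iff_vne]; omega
  set A : Matrix (Fin n) (Fin n) ℝ := M - lam • (1 : Matrix (Fin n) (Fin n) ℝ) with hA
  -- entries of A
  have hAdiag : ∀ i, A i i = M i i - lam := by
    intro i; simp [hA, Matrix.one_apply]
  have hAoff : ∀ i j, i ≠ j → A i j = M i j := by
    intro i j h; simp [hA, Matrix.one_apply, h]
  -- middle rows are -lam e_i
  have hmid : ∀ i : Fin n, 1 ≤ (i:ℕ) → (i:ℕ) ≤ n - 2 → ∀ j, i ≠ j → A i j = 0 := by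
    intro i h1 h2 j hij
    rw [hAoff i j hij, hM i h1 h2 j]
  -- key: permutations fixing the middle indices are 1 or swap a b
  have key : ∀ σ : Equiv.Perm (Fin n),
      (∀ i : Fin n, 1 ≤ (i:ℕ) → (i:ℕ) ≤ n - 2 → σ i = i) → σ = 1 ∨ σ = Equiv.swap a b := by
    intro σ hfix
    have hnotmid : ∀ i : Fin n, i = a ∨ i = b ∨ (1 ≤ (i:ℕ) ∧ (i:ℕ) ≤ n - 2) := by
      intro i
      rcases Nat.lt_or_ge (i:ℕ) 1 with h | h
      · left; simp [ha, Fin.ext_iff]; omega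
      rcases Nat.lt_or_ge (i:ℕ) (n-1) with h' | h'
      · right; right; exact ⟨h, by omega⟩
      · right; left; simp [hb, Fin.ext_iff]; have := i.isLt; omega
    have hσa : σ a = a ∨ σ a = b := by
      rcases hnotmid (σ a) with h | h | h
      · left; exact h
      · right; exact h
      · exfalso
        rw [σ.injective (hfix (σ a) h.1 h.2)] at h
        obtain ⟨h1', h2'⟩ := h
        have hav : (a:ℕ) = 0 := rfl
        omega
    have hσb : σ b = a ∨ σ b = b := by
      rcases hnotmid (σ b) with h | h | h
      · left; exact h
      · right; exact h
      · exfalso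
        rw [σ.injective (hfix (σ b) h.1 h.2)] at h
        obtain ⟨h1', h2'⟩ := h
        have hbv : (b:ℕ) = n - 1 := rfl
        omega
    rcases hσa with h1 | h1
    · left
      have h2 : σ b = b := by
        rcases hσb with h2 | h2
        · exfalso; exact hab (σ.injective (h1.trans h2.symm))
        · exact h2
      ext i
      rcases hnotmid i with h | h | h
      · simp [h, h1]
      · simp [h, h2]
      · simp [hfix i h.1 h.2]
    · right
      have h2 : σ b = a := by
        rcases hσb with h2 | h2
        · exact h2
        · exfalso; exact hab (σ.injective (h1.trans h2.symm))
      ext i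
      rcases hnotmid i with h | h | h
      · simp [h, h1, Equiv.swap_apply_left]
      · simp [h, h2, Equiv.swap_apply_right]
      · have hia : i ≠ a := by rintro rfl; have hav : (a:ℕ) = 0 := rfl; omega
        have hib : i ≠ b := by rintro rfl; have hbv : (b:ℕ) = n - 1 := rfl; omega
        simp [hfix i h.1 h.2, Equiv.swap_apply_of_ne_of_ne hia hib]
  rw [Matrix.det_apply]
  have hzero : ∀ σ ∈ (Finset.univ : Finset (Equiv.Perm (Fin n))),
      σ ∉ ({1, Equiv.swap a b} : Finset (Equiv.Perm (Fin n))) →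
      Equiv.Perm.sign σ • ∏ i, A (σ i) i = 0 := by
    intro σ _ hσ
    simp only [Finset.mem_insert, Finset.mem_singleton, not_or] at hσ
    -- σ⁻¹ is not 1 nor swap
    have hinv : ¬ (∀ i : Fin n, 1 ≤ (i:ℕ) → (i:ℕ) ≤ n - 2 → σ⁻¹ i = i) := by
      intro h
      rcases key σ⁻¹ h with h' | h'
      · exact hσ.1 (by rw [← inv_inv σ, h']; simp)
      · exact hσ.2 (by rw [← inv_inv σ, h', Equiv.swap_inv])
    push_neg at hinv
    obtain ⟨m, h1, h2, hm⟩ := hinv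
    have hfac : A (σ (σ⁻¹ m)) (σ⁻¹ m) = 0 := by
      rw [show σ (σ⁻¹ m) = m from σ.apply_symm_apply m]
      exact hmid m h1 h2 _ (fun h => hm h.symm)
    rw [Finset.prod_eq_zero (f := fun i => A (σ i) i) (Finset.mem_univ (σ⁻¹ m)) hfac, smul_zero]
  rw [Finset.sum_subset (Finset.subset_univ {1, Equiv.swap a b})
    (fun σ _ h => hzero σ (Finset.mem_univ σ) h) |>.symm]
  have hswapne : (1 : Equiv.Perm (Fin n)) ≠ Equiv.swap a b := by
    intro h
    have := congrArg (· a) h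
    simp [Equiv.swap_apply_left] at this
    exact hab this
  rw [Finset.sum_pair hswapne]
  -- compute the common middle product
  have hcard : ((Finset.univ.erase a).erase b).card = n - 2 := by
    rw [Finset.card_erase_of_mem (Finset.mem_erase.mpr ⟨hab.symm, Finset.mem_univ b⟩),
      Finset.card_erase_of_mem (Finset.mem_univ a)]
    simp
    omega
  have hmidprod : ∏ i ∈ (Finset.univ.erase a).erase b, A i i = (-lam) ^ (n - 2) := by
    rw [Finset.prod_congr rfl (g := fun _ => -lam), Finset.prod_const, hcard]
    intro i hi
    simp only [Finset.mem_erase] at hi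
    have h1 : 1 ≤ (i:ℕ) := by
      by_contra h
      exact hi.2.1 (by simp [ha, Fin.ext_iff]; omega)
    have h2 : (i:ℕ) ≤ n - 2 := by
      by_contra h
      exact hi.1 (by simp [hb, Fin.ext_iff]; have := i.isLt; omega)
    rw [hAdiag, hM i h1 h2]; ring
  have hsplit : ∀ f : Fin n → ℝ, ∏ i, f i = f a * (f b * ∏ i ∈ (Finset.univ.erase a).erase b, f i) := by
    intro f
    rw [← Finset.mul_prod_erase Finset.univ f (Finset.mem_univ a),
      ← Finset.mul_prod_erase _ f (Finset.mem_erase.mpr ⟨hab.symm, Finset.mem_univ b⟩)]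
  have t1 : ∏ i, A ((1 : Equiv.Perm (Fin n)) i) i = (M a a - lam) * ((M b b - lam) * (-lam) ^ (n-2)) := by
    simp only [Equiv.Perm.one_apply]
    rw [hsplit (fun i => A i i), hmidprod, hAdiag, hAdiag]
  have t2 : ∏ i, A (Equiv.swap a b i) i = M b a * (M a b * (-lam) ^ (n-2)) := by
    rw [hsplit (fun i => A (Equiv.swap a b i) i)]
    have e1 : ∏ i ∈ (Finset.univ.erase a).erase b, A (Equiv.swap a b i) i
        = ∏ i ∈ (Finset.univ.erase a).erase b, A i i := by
      apply Finset.prod_congr rfl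
      intro i hi
      simp only [Finset.mem_erase] at hi
      rw [Equiv.swap_apply_of_ne_of_ne hi.2.1 hi.1]
    rw [e1, hmidprod, Equiv.swap_apply_left, Equiv.swap_apply_right,
      hAoff b a (Ne.symm hab), hAoff a b hab]
  rw [t1, t2]
  simp [Equiv.Perm.sign_swap hab]
  ring
end

section
/- Let γ > 0, μ > 0, and let α_1, α_2, … be positive reals with α_0 = 1. For j ≥ 1 define S_j = Σ_{k=1}^{j} Π_{l=1}^{k} α_{l−1}/d^{(j)}_l, where d^{(j)}_l = α_l + μ for 1 ≤ l ≤ j−1 and d^{(j)}_j = γ + μ. Then S_{j+1} > S_j for every j ≥ 1. Consequently, with equal death rates in all infected compartments and all other parameters fixed, the basic reproduction number R_0 = f·√((c·c_v·S̄_v/(μ̃·S̄))·S_j) strictly increases with the number of relapses j − 1. -/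
open Finset

/-- `SjSum α γ μ j` is the sum `S_j = Σ_{k=1}^{j} Π_{l=1}^{k} α_{l−1}/d^{(j)}_l` appearing
under the square root in `R_0` for the model with `j` infected compartments, where
`d^{(j)}_l = α_l + μ` for `1 ≤ l ≤ j−1` and `d^{(j)}_j = γ + μ`. -/
noncomputable def SjSum (α : ℕ → ℝ) (γ μ : ℝ) (j : ℕ) : ℝ :=
  ∑ k ∈ Icc 1 j, ∏ l ∈ Icc 1 k, α (l - 1) / (if l = j then γ + μ else α l + μ)

/-- `S_{j+1} > S_j` for every `j ≥ 1`; consequently, with equal death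
rates in all infected compartments and all other parameters fixed, the basic reproduction
number `R_0 = f·√((c·c_v·S̄_v/(μ̃·S̄))·S_j)` strictly increases with the number of
relapses `j − 1`. -/
theorem stmt11 (γ μ : ℝ) (hγ : 0 < γ) (hμ : 0 < μ)
    (α : ℕ → ℝ) (hα0 : α 0 = 1) (hα : ∀ k, 1 ≤ k → 0 < α k)
    (f c cv Sb Sbv μt : ℝ) (hf : 0 < f) (hc : 0 < c) (hcv : 0 < cv)
    (hSb : 0 < Sb) (hSbv : 0 < Sbv) (hμt : 0 < μt) :
    ∀ j : ℕ, 1 ≤ j →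
      SjSum α γ μ j < SjSum α γ μ (j + 1) ∧
      f * Real.sqrt (c * cv * Sbv / (μt * Sb) * SjSum α γ μ j) <
        f * Real.sqrt (c * cv * Sbv / (μt * Sb) * SjSum α γ μ (j + 1)) := by
  have hαp : ∀ n, 0 < α n := by
    intro n
    cases n with
    | zero => rw [hα0]; exact one_pos
    | succ n => exact hα (n+1) (Nat.succ_le_succ (Nat.zero_le n))
  set q : ℕ → ℝ := fun k => ∏ l ∈ Icc 1 k, α (l-1) / (α l + μ) with hqdef
  have hq : ∀ k, 0 < q k := by
    intro k
    apply Finset.prod_pos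
    intro l _
    exact div_pos (hαp _) (by linarith [hαp l])
  have hqs : ∀ k, q (k+1) = q k * (α k / (α (k+1) + μ)) := by
    intro k
    simp only [hqdef]
    rw [Finset.prod_Icc_succ_top (Nat.le_add_left 1 k)]
    simp
  have main : ∀ m : ℕ, SjSum α γ μ (m+1) < SjSum α γ μ (m+2) := by
    intro m
    have hS1 : SjSum α γ μ (m+1) = (∑ k ∈ Icc 1 m, q k) + q m * (α m / (γ + μ)) := by
      unfold SjSum
      rw [Finset.sum_Icc_succ_top (Nat.le_add_left 1 m)]
      congr 1
      · apply Finset.sum_congr rfl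
        intro k hk
        apply Finset.prod_congr rfl
        intro l hl
        have hl2 : l ≤ k := (Finset.mem_Icc.mp hl).2
        have hk2 : k ≤ m := (Finset.mem_Icc.mp hk).2
        rw [if_neg (by omega)]
      · rw [Finset.prod_Icc_succ_top (Nat.le_add_left 1 m), if_pos rfl]
        simp only [Nat.add_sub_cancel]
        congr 1
        apply Finset.prod_congr rfl
        intro l hl
        have hl2 : l ≤ m := (Finset.mem_Icc.mp hl).2
        rw [if_neg (by omega)]
    have hS2 : SjSum α γ μ (m+2) =
        (∑ k ∈ Icc 1 m, q k) + q (m+1) + q (m+1) * (α (m+1) / (γ + μ)) := by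
      unfold SjSum
      rw [Finset.sum_Icc_succ_top (Nat.le_add_left 1 (m+1)),
        Finset.sum_Icc_succ_top (Nat.le_add_left 1 m)]
      congr 1
      congr 1
      · apply Finset.sum_congr rfl
        intro k hk
        apply Finset.prod_congr rfl
        intro l hl
        have hl2 : l ≤ k := (Finset.mem_Icc.mp hl).2
        have hk2 : k ≤ m := (Finset.mem_Icc.mp hk).2
        rw [if_neg (by omega)]
      · apply Finset.prod_congr rfl
        intro l hl
        have hl2 : l ≤ m+1 := (Finset.mem_Icc.mp hl).2
        rw [if_neg (by omega)]
      · rw [Finset.prod_Icc_succ_top (Nat.le_add_left 1 (m+1)), if_pos rfl]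
        simp only [Nat.add_sub_cancel]
        congr 1
        apply Finset.prod_congr rfl
        intro l hl
        have hl2 : l ≤ m+1 := (Finset.mem_Icc.mp hl).2
        rw [if_neg (by omega)]
    rw [hS1, hS2, hqs m]
    have h1 : 0 < γ + μ := by linarith
    have h2 : 0 < α (m+1) + μ := by linarith [hαp (m+1)]
    have h3 : 0 < q m * α m := mul_pos (hq m) (hαp m)
    have key : q m * (α m / (γ + μ)) <
        q m * (α m / (α (m+1) + μ)) + q m * (α m / (α (m+1) + μ)) * (α (m+1) / (γ + μ)) := by
      rw [← sub_pos]
      have e : q m * (α m / (α (m+1) + μ)) + q m * (α m / (α (m+1) + μ)) * (α (m+1) / (γ + μ))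
          - q m * (α m / (γ + μ)) = q m * α m * γ / ((α (m+1) + μ) * (γ + μ)) := by
        field_simp
        ring
      rw [e]
      exact div_pos (mul_pos h3 hγ) (mul_pos h2 h1)
    linarith
  have hpos : ∀ j : ℕ, 1 ≤ j → 0 < SjSum α γ μ j := by
    intro j hj
    unfold SjSum
    apply Finset.sum_pos
    · intro k hk
      apply Finset.prod_pos
      intro l _
      apply div_pos (hαp _)
      split_ifs <;> linarith [hαp l]
    · exact ⟨1, Finset.mem_Icc.mpr ⟨le_refl 1, hj⟩⟩
  intro j hj
  obtain ⟨m, rfl⟩ : ∃ m, j = m + 1 := ⟨j - 1, by omega⟩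
  refine ⟨main m, ?_⟩
  have hcoef : 0 < c * cv * Sbv / (μt * Sb) := by positivity
  apply mul_lt_mul_of_pos_left _ hf
  apply Real.sqrt_lt_sqrt
  · exact mul_nonneg hcoef.le (hpos (m+1) (by omega)).le
  · exact mul_lt_mul_of_pos_left (main m) hcoef
end

section
/- For every real λ, the determinant of the (j+1)×(j+1) matrix T(λ) equals p(λ) := Π_{i=1}^{j+1}(λ + ξ_i) − (f²·c·c_v·S̄_v/S̄)·Σ_{i=0}^{j−1} α_0·α_1⋯α_i·Π_{m=i+2}^{j}(λ + ξ_m). -/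
open Finset

/-- Determinant of an n×n matrix which is upper bidiagonal in rows 0..n-2
(diagonal `a`, superdiagonal `e`) and whose last row is constant `b`. -/
lemma detB : ∀ (n : ℕ), 1 ≤ n → ∀ (a e : ℕ → ℝ) (b : ℝ)
    (M : Matrix (Fin n) (Fin n) ℝ),
    (∀ i l : Fin n, M i l =
      if (i : ℕ) = n - 1 then b
      else if (l : ℕ) = (i : ℕ) then a (i : ℕ)
      else if (l : ℕ) = (i : ℕ) + 1 then e (i : ℕ) else 0) →
    M.det = ∑ l ∈ range n, (-1 : ℝ) ^ (n - 1 + l) * b * (∏ r ∈ range l, a r) *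
      ∏ r ∈ range (n - 1 - l), e (l + r) := by
  intro n hn
  induction n, hn using Nat.le_induction with
  | base =>
    intro a e b M hM
    rw [Matrix.det_fin_one, hM]
    simp
  | succ n hn ih =>
    intro a e b M hM
    rw [Matrix.det_succ_column_zero]
    have h0 : ∀ i : Fin (n + 1), i ≠ 0 → i ≠ Fin.last n →
        (-1 : ℝ) ^ (i : ℕ) * M i 0 * (M.submatrix i.succAbove Fin.succ).det = 0 := by
      intro i hi hl
      have hi' : (i : ℕ) ≠ 0 := fun h => hi (Fin.ext h)
      have hl' : (i : ℕ) ≠ n := fun h => hl (Fin.ext (by simpa using h))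
      rw [hM]
      simp only [Fin.val_zero]
      rw [if_neg (by omega)]
      simp only [show ¬ (0:ℕ) = (i:ℕ) by omega, show ¬ (0:ℕ) = (i:ℕ) + 1 by omega, if_false]
      ring
    rw [← Finset.sum_subset (Finset.subset_univ ({0, Fin.last n} : Finset (Fin (n+1))))
      (fun i _ hi => h0 i (by rintro rfl; simp at hi) (by rintro rfl; simp at hi))]
    have hne : (0 : Fin (n+1)) ≠ Fin.last n := by
      intro h
      have := congrArg (Fin.val) h
      simp [Fin.val_last] at this
      omega
    rw [Finset.sum_pair hne]
    -- first term : a 0 * det of shifted matrix of same shape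
    have hM00 : M 0 0 = a 0 := by
      rw [hM]; simp only [Fin.val_zero]
      rw [if_neg (by omega)]; simp
    have hsub1 : (M.submatrix (0 : Fin (n+1)).succAbove Fin.succ).det =
        ∑ l ∈ range n, (-1 : ℝ) ^ (n - 1 + l) * b * (∏ r ∈ range l, a (r + 1)) *
          ∏ r ∈ range (n - 1 - l), e (l + r + 1) := by
      have := ih (fun r => a (r + 1)) (fun r => e (r + 1)) b
        (M.submatrix (0 : Fin (n+1)).succAbove Fin.succ) ?_
      · rw [this]
      · intro i l
        rw [Matrix.submatrix_apply, Fin.succAbove_zero, hM]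
        simp only [Fin.val_succ]
        by_cases h1 : (i : ℕ) = n - 1
        · rw [if_pos (by omega), if_pos h1]
        · rw [if_neg (by omega), if_neg h1]
          by_cases h2 : (l : ℕ) = (i : ℕ)
          · rw [if_pos (by omega), if_pos h2]
          · rw [if_neg (by omega), if_neg h2]
            by_cases h3 : (l : ℕ) = (i : ℕ) + 1
            · rw [if_pos (by omega), if_pos h3]
            · rw [if_neg (by omega), if_neg h3]
    -- second term : the minor is lower triangular with diagonal e
    have hMl0 : M (Fin.last n) 0 = b := by
      rw [hM]; simp only [Fin.val_last]
      rw [if_pos (by omega)]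
    have hsub2 : (M.submatrix (Fin.last n).succAbove Fin.succ).det =
        ∏ r ∈ range n, e r := by
      rw [Matrix.det_of_lowerTriangular]
      · rw [← Fin.prod_univ_eq_prod_range]
        refine Finset.prod_congr rfl fun r _ => ?_
        rw [Matrix.submatrix_apply, Fin.succAbove_last, hM]
        simp only [Fin.coe_castSucc, Fin.val_succ]
        rw [if_neg (by omega), if_neg (by omega)]; simp
      · intro r c hrc
        have hrc' : (r : ℕ) < (c : ℕ) := hrc
        rw [Matrix.submatrix_apply, Fin.succAbove_last, hM]
        simp only [Fin.coe_castSucc, Fin.val_succ]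
        rw [if_neg (by omega), if_neg (by omega), if_neg (by omega)]
    rw [hM00, hMl0, hsub1, hsub2]
    rw [Finset.sum_range_succ']
    simp only [Fin.val_zero, Fin.val_last, pow_zero, one_mul]
    rw [Finset.mul_sum]
    congr 1
    · refine Finset.sum_congr rfl fun l hl => ?_
      have hl' : l < n := mem_range.mp hl
      rw [Finset.prod_range_succ' a l]
      have hpow : (-1 : ℝ) ^ (n + 1 - 1 + (l + 1)) = (-1 : ℝ) ^ (n - 1 + l) := by
        rw [show n + 1 - 1 + (l + 1) = (n - 1 + l) + 2 by omega, pow_add]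
        norm_num
      have hprod : (∏ r ∈ range (n + 1 - 1 - (l + 1)), e (l + 1 + r)) =
          ∏ r ∈ range (n - 1 - l), e (l + r + 1) := by
        rw [show n + 1 - 1 - (l + 1) = n - 1 - l by omega]
        exact Finset.prod_congr rfl fun r _ => by rw [show l + 1 + r = l + r + 1 by omega]
      rw [hpow, hprod]
      ring
    · have : ∀ r ∈ range n, e (0 + r) = e r := fun r _ => by rw [Nat.zero_add]
      rw [show n + 1 - 1 - 0 = n by omega, Finset.prod_congr rfl this]
      simp [show n + 1 - 1 + 0 = n by omega]

/-- The determinant of the `(j+1)×(j+1)` matrix `T(λ)` (the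
infected-and-vector block of the Jacobian of the relapsing host–vector model at the
disease-free equilibrium, shifted by `λ`) equals
`p(λ) = Π_{i=1}^{j+1}(λ+ξ_i) − (f²·c·c_v·S̄_v/S̄)·Σ_{i=0}^{j−1} α_0⋯α_i·Π_{m=i+2}^{j}(λ+ξ_m)`.
(Rows/columns are 0-indexed: `i : Fin (j+1)` is the 1-indexed row `i+1`.) -/
theorem stmt12 (j : ℕ) (hj : 1 ≤ j)
    (α μ : ℕ → ℝ) (γ μt f c cv Sb Sbv : ℝ)
    (hα0 : α 0 = 1)
    (hα : ∀ i, 1 ≤ i → i ≤ j - 1 → 0 < α i)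
    (hμ : ∀ i, 1 ≤ i → i ≤ j → 0 < μ i)
    (hγ : 0 < γ) (hμt : 0 < μt) (hf : 0 < f) (hc : 0 < c) (hcv : 0 < cv)
    (hSb : 0 < Sb) (hSbv : 0 < Sbv)
    (ξ : ℕ → ℝ)
    (hξ : ∀ i, 1 ≤ i → i ≤ j - 1 → ξ i = α i + μ i)
    (hξj : ξ j = γ + μ j) (hξj1 : ξ (j + 1) = μt)
    (T : ℝ → Matrix (Fin (j + 1)) (Fin (j + 1)) ℝ)
    (hT : ∀ lam : ℝ, T lam = Matrix.of fun i l : Fin (j + 1) =>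
      if i = l then lam + ξ ((i : ℕ) + 1)
      else if (i : ℕ) = (l : ℕ) + 1 ∧ (i : ℕ) ≤ j - 1 then -α ((l : ℕ) + 1)
      else if (i : ℕ) = 0 ∧ (l : ℕ) = j then -(f * cv)
      else if (i : ℕ) = j ∧ (l : ℕ) < j then -(f * c * Sbv / Sb)
      else 0) :
    ∀ lam : ℝ,
      (T lam).det =
        ∏ i ∈ Icc 1 (j + 1), (lam + ξ i) -
          f ^ 2 * c * cv * Sbv / Sb *
            ∑ i ∈ range j, (∏ l ∈ Icc 0 i, α l) * ∏ m ∈ Icc (i + 2) j, (lam + ξ m) := by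
  intro lam
  set M := T lam with hMdef
  have hM : ∀ i l : Fin (j + 1), M i l =
      if i = l then lam + ξ ((i : ℕ) + 1)
      else if (i : ℕ) = (l : ℕ) + 1 ∧ (i : ℕ) ≤ j - 1 then -α ((l : ℕ) + 1)
      else if (i : ℕ) = 0 ∧ (l : ℕ) = j then -(f * cv)
      else if (i : ℕ) = j ∧ (l : ℕ) < j then -(f * c * Sbv / Sb)
      else 0 := by
    intro i l
    rw [hMdef, hT lam]
    rfl
  rw [Matrix.det_succ_column M (Fin.last j)]
  -- the only nonzero entries in the last column are in rows 0 and last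
  have h0 : ∀ i : Fin (j + 1), i ≠ 0 → i ≠ Fin.last j →
      (-1 : ℝ) ^ ((i : ℕ) + ((Fin.last j : Fin (j+1)) : ℕ)) * M i (Fin.last j) *
        (M.submatrix i.succAbove (Fin.last j).succAbove).det = 0 := by
    intro i hi hl
    have hi' : (i : ℕ) ≠ 0 := fun h => hi (Fin.ext h)
    have hl' : (i : ℕ) ≠ j := fun h => hl (Fin.ext (by simpa using h))
    have hlv : ((Fin.last j : Fin (j+1)) : ℕ) = j := Fin.val_last j
    rw [hM]
    rw [if_neg (fun h => hl (h.trans rfl)), if_neg (by simp [hlv] <;> omega),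
      if_neg (by simp [hlv] <;> omega), if_neg (by simp [hlv] <;> omega)]
    ring
  rw [← Finset.sum_subset (Finset.subset_univ ({0, Fin.last j} : Finset (Fin (j+1))))
    (fun i _ hi => h0 i (by rintro rfl; simp at hi) (by rintro rfl; simp at hi))]
  have hne : (0 : Fin (j+1)) ≠ Fin.last j := by
    intro h
    have := congrArg (Fin.val) h
    simp [Fin.val_last] at this
    omega
  rw [Finset.sum_pair hne]
  -- entries
  have hE0 : M 0 (Fin.last j) = -(f * cv) := by
    rw [hM]
    rw [if_neg hne, if_neg (by simp [Fin.val_last] <;> omega), if_pos (by simp [Fin.val_last])]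
  have hEl : M (Fin.last j) (Fin.last j) = lam + ξ (j + 1) := by
    rw [hM, if_pos rfl, Fin.val_last]
  -- minor at (last, last): lower triangular
  have hsub2 : (M.submatrix (Fin.last j).succAbove (Fin.last j).succAbove).det =
      ∏ i ∈ range j, (lam + ξ (i + 1)) := by
    rw [Matrix.det_of_lowerTriangular]
    · rw [← Fin.prod_univ_eq_prod_range]
      refine Finset.prod_congr rfl fun r _ => ?_
      rw [Matrix.submatrix_apply, Fin.succAbove_last, hM, if_pos rfl, Fin.coe_castSucc]
    · intro r c hrc
      have hrc' : (r : ℕ) < (c : ℕ) := hrc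
      have hcj : (c : ℕ) < j := c.isLt
      rw [Matrix.submatrix_apply, Fin.succAbove_last, hM]
      rw [if_neg (fun h => absurd (congrArg Fin.val h) (by simp <;> omega)),
        if_neg (by simp [Fin.coe_castSucc] <;> omega),
        if_neg (by simp [Fin.coe_castSucc] <;> omega),
        if_neg (by simp [Fin.coe_castSucc] <;> omega)]
  -- minor at (0, last): apply detB
  have hsub1 : (M.submatrix (0 : Fin (j+1)).succAbove (Fin.last j).succAbove).det =
      ∑ l ∈ range j, (-1 : ℝ) ^ (j - 1 + l) * (-(f * c * Sbv / Sb)) *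
        (∏ r ∈ range l, -α (r + 1)) * ∏ r ∈ range (j - 1 - l), (lam + ξ (l + r + 2)) := by
    refine detB j hj (fun r => -α (r + 1)) (fun r => lam + ξ (r + 2)) (-(f * c * Sbv / Sb))
      _ ?_
    intro i l
    rw [Matrix.submatrix_apply, Fin.succAbove_zero, Fin.succAbove_last, hM]
    have hil : (i : ℕ) < j := i.isLt
    have hll : (l : ℕ) < j := l.isLt
    by_cases h1 : (i : ℕ) = j - 1
    · rw [if_neg (fun h => absurd (congrArg Fin.val h) (by simp <;> omega)),
        if_neg (by simp [Fin.val_succ, Fin.coe_castSucc] <;> omega),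
        if_neg (by simp [Fin.val_succ] <;> omega),
        if_pos (by simp [Fin.val_succ, Fin.coe_castSucc] <;> omega), if_pos h1]
    · rw [if_neg h1]
      by_cases h2 : (l : ℕ) = (i : ℕ)
      · rw [if_neg (fun h => absurd (congrArg Fin.val h) (by simp [Fin.val_succ] <;> omega)),
          if_pos (by simp [Fin.val_succ, Fin.coe_castSucc] <;> omega), if_pos h2]
        simp [Fin.coe_castSucc, h2]
      · rw [if_neg h2]
        by_cases h3 : (l : ℕ) = (i : ℕ) + 1
        · rw [if_pos (Fin.ext (by simp [Fin.val_succ, Fin.coe_castSucc] <;> omega)), if_pos h3]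
          simp [Fin.val_succ]
        · rw [if_neg h3,
            if_neg (fun h => absurd (congrArg Fin.val h) (by simp [Fin.val_succ] <;> omega)),
            if_neg (by simp [Fin.val_succ, Fin.coe_castSucc] <;> omega),
            if_neg (by simp [Fin.val_succ] <;> omega),
            if_neg (by simp [Fin.val_succ] <;> omega)]
  rw [hE0, hEl, hsub1, hsub2]
  simp only [Fin.val_zero, Fin.val_last, Nat.zero_add]
  -- product part
  have hprodIcc : ∏ i ∈ Icc 1 (j + 1), (lam + ξ i) =
      (∏ i ∈ range j, (lam + ξ (i + 1))) * (lam + ξ (j + 1)) := by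
    rw [← Finset.Ico_add_one_right_eq_Icc, Finset.prod_Ico_eq_prod_range]
    rw [show j + 1 + 1 - 1 = j + 1 by omega, Finset.prod_range_succ]
    congr 1
    · exact Finset.prod_congr rfl fun i _ => by rw [Nat.add_comm 1 i]
    · rw [Nat.add_comm 1 j]
  -- even power
  have heven : (-1 : ℝ) ^ (j + j) = 1 := by
    rw [show j + j = 2 * j by omega, pow_mul]
    norm_num
  rw [hprodIcc, heven, Finset.mul_sum]
  rw [Finset.mul_sum]
  have hterm : ∀ l ∈ range j, (-1:ℝ)^j * -(f*cv) * (((-1:ℝ)^(j-1+l) * -(f*c*Sbv/Sb) *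
      ∏ r ∈ range l, -α (r+1)) * ∏ r ∈ range (j-1-l), (lam + ξ (l+r+2))) =
      -(f^2*c*cv*Sbv/Sb * ((∏ l' ∈ Icc 0 l, α l') * ∏ m ∈ Icc (l+2) j, (lam + ξ m))) := by
    intro l hl
    have hl' : l < j := mem_range.mp hl
    have hA : (∏ r ∈ range l, -α (r+1)) = (-1:ℝ)^l * ∏ l' ∈ Icc 0 l, α l' := by
      have h1 : (Icc 0 l) = range (l+1) := by
        rw [Finset.range_eq_Ico, Finset.Ico_add_one_right_eq_Icc]
      rw [h1, Finset.prod_range_succ' α l, hα0, mul_one]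
      calc ∏ r ∈ range l, -α (r+1) = ∏ r ∈ range l, (-1) * α (r+1) := by
            refine Finset.prod_congr rfl fun r _ => by ring
        _ = (∏ _r ∈ range l, (-1:ℝ)) * ∏ r ∈ range l, α (r+1) := Finset.prod_mul_distrib
        _ = (-1:ℝ)^l * ∏ r ∈ range l, α (r+1) := by rw [Finset.prod_const]; simp
    have hB : (∏ r ∈ range (j-1-l), (lam + ξ (l+r+2))) =
        ∏ m ∈ Icc (l+2) j, (lam + ξ m) := by
      rw [← Finset.Ico_add_one_right_eq_Icc, Finset.prod_Ico_eq_prod_range,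
        show j+1-(l+2) = j-1-l by omega]
      exact Finset.prod_congr rfl fun r _ => by rw [show l+2+r = l+r+2 by omega]
    have hsign : (-1:ℝ)^j * (-1:ℝ)^(j-1+l) * (-1:ℝ)^l = -1 := by
      rw [← pow_add, ← pow_add, show j + (j-1+l) + l = 2*(j-1+l)+1 by omega,
        pow_succ, pow_mul]
      norm_num
    rw [hA, hB]
    linear_combination (f*cv*(f*c*Sbv/Sb) * (∏ l' ∈ Icc 0 l, α l') *
      (∏ m ∈ Icc (l+2) j, (lam + ξ m))) * hsign
  rw [Finset.sum_congr rfl hterm, Finset.sum_neg_distrib]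
  ring
end

section
/- The constant term of p satisfies p(0) = (1 − R_0²)·Π_{i=1}^{j+1} ξ_i. In particular, since all ξ_i > 0, p(0) = 0 if and only if R_0 = 1. -/
open Finset

/-- The constant term of the characteristic polynomial
`p(λ) = Π_{i=1}^{j+1}(λ+ξ_i) − (f²·c·c_v·S̄_v/S̄)·Σ_{i=0}^{j−1} α_0⋯α_i·Π_{m=i+2}^{j}(λ+ξ_m)`
satisfies `p(0) = (1 − R_0²)·Π_{i=1}^{j+1} ξ_i`; in particular `p(0) = 0 ↔ R_0 = 1`. -/
theorem stmt13 (j : ℕ) (hj : 1 ≤ j)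
    (α μ : ℕ → ℝ) (γ μt f c cv Sb Sbv R0 : ℝ)
    (hα0 : α 0 = 1)
    (hα : ∀ i, 1 ≤ i → i ≤ j - 1 → 0 < α i)
    (hμ : ∀ i, 1 ≤ i → i ≤ j → 0 < μ i)
    (hγ : 0 < γ) (hμt : 0 < μt) (hf : 0 < f) (hc : 0 < c) (hcv : 0 < cv)
    (hSb : 0 < Sb) (hSbv : 0 < Sbv)
    (ξ : ℕ → ℝ)
    (hξ : ∀ i, 1 ≤ i → i ≤ j - 1 → ξ i = α i + μ i)
    (hξj : ξ j = γ + μ j) (hξj1 : ξ (j + 1) = μt)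
    (hR0 : 0 < R0)
    (hR0sq : R0 ^ 2 = f ^ 2 * c * cv * Sbv / (Sb * ξ (j + 1)) *
      ∑ k ∈ Icc 1 j, (∏ l ∈ Icc 0 (k - 1), α l) / ∏ l ∈ Icc 1 k, ξ l)
    (p : ℝ → ℝ)
    (hp : ∀ lam : ℝ, p lam =
      ∏ i ∈ Icc 1 (j + 1), (lam + ξ i) -
        f ^ 2 * c * cv * Sbv / Sb *
          ∑ i ∈ range j, (∏ l ∈ Icc 0 i, α l) * ∏ m ∈ Icc (i + 2) j, (lam + ξ m)) :
    p 0 = (1 - R0 ^ 2) * ∏ i ∈ Icc 1 (j + 1), ξ i ∧ (p 0 = 0 ↔ R0 = 1) := by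
  have hξpos : ∀ i, 1 ≤ i → i ≤ j + 1 → 0 < ξ i := by
    intro i h1 h2
    rcases lt_trichotomy i j with h | h | h
    · have hij : i ≤ j - 1 := by omega
      rw [hξ i h1 hij]
      exact add_pos (hα i h1 hij) (hμ i h1 (by omega))
    · subst h; rw [hξj]; exact add_pos hγ (hμ i h1 le_rfl)
    · have : i = j + 1 := by omega
      subst this; rw [hξj1]; exact hμt
  have hprodpos : 0 < ∏ i ∈ Icc 1 (j + 1), ξ i := by
    apply Finset.prod_pos
    intro i hi
    simp only [Finset.mem_Icc] at hi
    exact hξpos i hi.1 hi.2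
  -- products of ξ over initial segments are nonzero
  have hprodpos' : ∀ k, k ≤ j + 1 → 0 < ∏ l ∈ Icc 1 k, ξ l := by
    intro k hk
    apply Finset.prod_pos
    intro i hi
    simp only [Finset.mem_Icc] at hi
    exact hξpos i hi.1 (by omega)
  have hsplit : ∀ i, i < j → (∏ l ∈ Icc 1 (1 + i), ξ l) * ∏ m ∈ Icc (i + 2) j, ξ m
      = ∏ l ∈ Icc 1 j, ξ l := by
    intro i hi
    have h1 : Icc (1 : ℕ) (1 + i) = Ioc 0 (1 + i) := by
      rw [← Finset.Icc_add_one_left_eq_Ioc]; rfl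
    have h2 : Icc (i + 2) j = Ioc (i + 1) j := by
      rw [← Finset.Icc_add_one_left_eq_Ioc]; rfl
    have h3 : Icc (1 : ℕ) j = Ioc 0 j := by
      rw [← Finset.Icc_add_one_left_eq_Ioc]; rfl
    rw [h1, h2, h3, show 1 + i = i + 1 by omega]
    exact Finset.prod_Ioc_consecutive ξ (by omega) (by omega)
  have hsum : (∑ k ∈ Icc 1 j, (∏ l ∈ Icc 0 (k - 1), α l) / ∏ l ∈ Icc 1 k, ξ l)
      * ∏ l ∈ Icc 1 j, ξ l
      = ∑ i ∈ range j, (∏ l ∈ Icc 0 i, α l) * ∏ m ∈ Icc (i + 2) j, ξ m := by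
    rw [Finset.sum_mul, ← Finset.Ico_add_one_right_eq_Icc, Finset.sum_Ico_eq_sum_range]
    simp only [show j + 1 - 1 = j from rfl]
    apply Finset.sum_congr rfl
    intro i hi
    simp only [Finset.mem_range] at hi
    have hne : (∏ l ∈ Icc 1 (1 + i), ξ l) ≠ 0 := (hprodpos' (1 + i) (by omega)).ne'
    rw [Finset.Ico_add_one_right_eq_Icc, show 1 + i - 1 = i by omega, ← hsplit i hi]
    field_simp
  have hkey : f ^ 2 * c * cv * Sbv / Sb *
      ∑ i ∈ range j, (∏ l ∈ Icc 0 i, α l) * ∏ m ∈ Icc (i + 2) j, ξ m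
      = R0 ^ 2 * ∏ i ∈ Icc 1 (j + 1), ξ i := by
    rw [hR0sq, ← hsum]
    have hii : ∏ i ∈ Icc 1 (j + 1), ξ i = (∏ i ∈ Icc 1 j, ξ i) * ξ (j + 1) :=
      Finset.prod_Icc_succ_top (by omega) ξ
    have hne : ξ (j + 1) ≠ 0 := (hξpos (j + 1) (by omega) le_rfl).ne'
    rw [hii]
    field_simp
  have hp0 : p 0 = (1 - R0 ^ 2) * ∏ i ∈ Icc 1 (j + 1), ξ i := by
    rw [hp 0]
    simp only [zero_add]
    rw [hkey]
    ring
  refine ⟨hp0, ?_⟩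
  rw [hp0]
  constructor
  · intro h
    have h1 : 1 - R0 ^ 2 = 0 := by
      rcases mul_eq_zero.mp h with h' | h'
      · exact h'
      · exact absurd h' hprodpos.ne'
    have h2 : (R0 - 1) * (R0 + 1) = 0 := by nlinarith
    rcases mul_eq_zero.mp h2 with h' | h' <;> linarith
  · intro h
    rw [h]
    ring
end

section
/- If R_0 = 1, then the coefficient of λ in p(λ), namely Σ_{i=1}^{j+1} Π_{m≠i, 1≤m≤j+1} ξ_m − (f²·c·c_v·S̄_v/S̄)·Σ_{k=0}^{j−2} α_0⋯α_k·Σ_{i=k+2}^{j} Π_{m=k+2, m≠i}^{j} ξ_m, is nonzero. Together with p(0) = 0 when R_0 = 1, this shows that 0 is a simple root of p, i.e. the zero eigenvalue of the Jacobian of the relapsing host–vector model at the disease-free equilibrium is simple when R_0 = 1. -/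
open Finset

/-- When `R_0 = 1` the coefficient of `λ` in
`p(λ) = Π_{i=1}^{j+1}(λ+ξ_i) − (f²·c·c_v·S̄_v/S̄)·Σ_{i=0}^{j−1} α_0⋯α_i·Π_{m=i+2}^{j}(λ+ξ_m)`,
namely
`Σ_{i=1}^{j+1} Π_{m≠i} ξ_m − (f²·c·c_v·S̄_v/S̄)·Σ_{k=0}^{j−2} α_0⋯α_k·Σ_{i=k+2}^{j} Π_{m=k+2,m≠i}^{j} ξ_m`,
is nonzero; hence `0` is a simple root of `p`, i.e. the zero eigenvalue of the Jacobian
of the relapsing host–vector model at the disease-free equilibrium is simple. -/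
theorem stmt14 (j : ℕ) (hj : 1 ≤ j)
    (α μ : ℕ → ℝ) (γ μt f c cv Sb Sbv R0 : ℝ)
    (hα0 : α 0 = 1)
    (hα : ∀ i, 1 ≤ i → i ≤ j - 1 → 0 < α i)
    (hμ : ∀ i, 1 ≤ i → i ≤ j → 0 < μ i)
    (hγ : 0 < γ) (hμt : 0 < μt) (hf : 0 < f) (hc : 0 < c) (hcv : 0 < cv)
    (hSb : 0 < Sb) (hSbv : 0 < Sbv)
    (ξ : ℕ → ℝ)
    (hξ : ∀ i, 1 ≤ i → i ≤ j - 1 → ξ i = α i + μ i)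
    (hξj : ξ j = γ + μ j) (hξj1 : ξ (j + 1) = μt)
    (hR0 : 0 < R0)
    (hR0sq : R0 ^ 2 = f ^ 2 * c * cv * Sbv / (Sb * ξ (j + 1)) *
      ∑ k ∈ Icc 1 j, (∏ l ∈ Icc 0 (k - 1), α l) / ∏ l ∈ Icc 1 k, ξ l)
    (hR0one : R0 = 1) :
    (∑ i ∈ Icc 1 (j + 1), ∏ m ∈ (Icc 1 (j + 1)).erase i, ξ m) -
        f ^ 2 * c * cv * Sbv / Sb *
          ∑ k ∈ range (j - 1), (∏ l ∈ Icc 0 k, α l) *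
            ∑ i ∈ Icc (k + 2) j, ∏ m ∈ (Icc (k + 2) j).erase i, ξ m ≠ 0 := by
  set K := f ^ 2 * c * cv * Sbv / Sb with hKdef
  have hKpos : 0 < K := by positivity
  -- positivity of ξ on [1, j+1]
  have hξpos : ∀ i, 1 ≤ i → i ≤ j + 1 → 0 < ξ i := by
    intro i h1 h2
    rcases eq_or_lt_of_le h2 with h | h
    · rw [h, hξj1]; exact hμt
    · have hij : i ≤ j := by omega
      rcases eq_or_lt_of_le hij with h2' | h2'
      · rw [h2', hξj]; exact add_pos hγ (hμ j hj le_rfl)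
      · have hle : i ≤ j - 1 := by omega
        rw [hξ i h1 hle]
        exact add_pos (hα i h1 hle) (hμ i h1 (by omega))
  have hαpos : ∀ l, l ≤ j - 1 → 0 < α l := by
    intro l hl
    rcases Nat.eq_zero_or_pos l with h | h
    · rw [h, hα0]; exact one_pos
    · exact hα l h hl
  have hξne : ξ (j + 1) ≠ 0 := ne_of_gt (hξpos (j+1) (by omega) le_rfl)
  have hPpos : 0 < ∏ m ∈ Icc 1 j, ξ m := by
    apply Finset.prod_pos
    intro m hm
    simp only [mem_Icc] at hm
    exact hξpos m hm.1 (by omega)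
  -- products of α over initial segments are positive
  have hApos : ∀ k, k ≤ j → 0 < ∏ l ∈ Icc 0 (k - 1), α l := by
    intro k hk
    apply Finset.prod_pos
    intro l hl
    simp only [mem_Icc] at hl
    exact hαpos l (by omega)
  have hQpos : ∀ k, 0 < ∏ m ∈ Icc (k + 1) j, ξ m := by
    intro k
    apply Finset.prod_pos
    intro m hm
    simp only [mem_Icc] at hm
    exact hξpos m (by omega) (by omega)
  have hΞpos : ∀ k, k ≤ j → 0 < ∏ l ∈ Icc 1 k, ξ l := by
    intro k hk
    apply Finset.prod_pos
    intro l hl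
    simp only [mem_Icc] at hl
    exact hξpos l hl.1 (by omega)
  -- key identity from R0 = 1
  have h1 : ξ (j + 1) = K * ∑ k ∈ Icc 1 j, (∏ l ∈ Icc 0 (k - 1), α l) / ∏ l ∈ Icc 1 k, ξ l := by
    have h := hR0sq
    rw [hR0one, one_pow] at h
    rw [hKdef]
    have hSbne : Sb ≠ 0 := ne_of_gt hSb
    field_simp at h ⊢
    linear_combination h
  have hsplitprod : ∀ k ∈ Icc 1 j,
      (∏ l ∈ Icc 1 k, ξ l) * ∏ m ∈ Icc (k + 1) j, ξ m = ∏ m ∈ Icc 1 j, ξ m := by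
    intro k hk
    simp only [mem_Icc] at hk
    rw [show Icc 1 k = Ioc 0 k from Finset.Icc_add_one_left_eq_Ioc 0 k,
        show Icc (k+1) j = Ioc k j from Finset.Icc_add_one_left_eq_Ioc k j,
        show Icc 1 j = Ioc 0 j from Finset.Icc_add_one_left_eq_Ioc 0 j]
    exact Finset.prod_Ioc_consecutive ξ (Nat.zero_le k) hk.2
  have hKey : ξ (j + 1) * ∏ m ∈ Icc 1 j, ξ m
      = K * ∑ k ∈ Icc 1 j, (∏ l ∈ Icc 0 (k - 1), α l) * ∏ m ∈ Icc (k + 1) j, ξ m := by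
    rw [h1, mul_assoc, Finset.sum_mul]
    congr 1
    refine Finset.sum_congr rfl ?_
    intro k hk
    have hkj : k ≤ j := (mem_Icc.mp hk).2
    rw [div_mul_eq_mul_div, ← hsplitprod k hk, mul_comm (∏ l ∈ Icc 1 k, ξ l),
        mul_div_assoc, mul_div_assoc, div_self (ne_of_gt (hΞpos k hkj)), mul_one]
  -- split the first sum at i = j+1
  have hins : Icc 1 (j + 1) = insert (j + 1) (Icc 1 j) := by
    ext x; simp only [mem_Icc, mem_insert]; omega
  have hnotmem : j + 1 ∉ Icc 1 j := by simp
  have hsplit : ∑ i ∈ Icc 1 (j + 1), ∏ m ∈ (Icc 1 (j + 1)).erase i, ξ m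
      = (∏ m ∈ Icc 1 j, ξ m) + ξ (j + 1) * ∑ i ∈ Icc 1 j, ∏ m ∈ (Icc 1 j).erase i, ξ m := by
    rw [hins, Finset.sum_insert hnotmem, Finset.erase_insert hnotmem, Finset.mul_sum]
    congr 1
    refine Finset.sum_congr rfl ?_
    intro i hi
    have hine : i ≠ j + 1 := by
      simp only [mem_Icc] at hi; omega
    rw [Finset.erase_insert_of_ne (Ne.symm hine),
        Finset.prod_insert (fun h => hnotmem (Finset.erase_subset _ _ h))]
  -- rewrite first double sum with division
  have hS1 : ξ (j + 1) * ∑ i ∈ Icc 1 j, ∏ m ∈ (Icc 1 j).erase i, ξ m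
      = K * ∑ i ∈ Icc 1 j, ∑ k ∈ Icc 1 j,
          (∏ l ∈ Icc 0 (k - 1), α l) * (∏ m ∈ Icc (k + 1) j, ξ m) / ξ i := by
    rw [Finset.mul_sum, Finset.mul_sum]
    refine Finset.sum_congr rfl ?_
    intro i hi
    have hii := mem_Icc.mp hi
    have hξi : 0 < ξ i := hξpos i hii.1 (by omega)
    have herase : ∏ m ∈ (Icc 1 j).erase i, ξ m = (∏ m ∈ Icc 1 j, ξ m) / ξ i := by
      rw [eq_div_iff (ne_of_gt hξi)]
      exact Finset.prod_erase_mul _ _ hi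
    rw [herase, mul_div_assoc', hKey, mul_div_assoc, Finset.sum_div, Finset.mul_sum]
  -- rewrite second double sum
  have hS2 : ∑ k ∈ range (j - 1), (∏ l ∈ Icc 0 k, α l) *
        ∑ i ∈ Icc (k + 2) j, ∏ m ∈ (Icc (k + 2) j).erase i, ξ m
      = ∑ k ∈ Icc 1 (j - 1), ∑ i ∈ Icc (k + 1) j,
          (∏ l ∈ Icc 0 (k - 1), α l) * (∏ m ∈ Icc (k + 1) j, ξ m) / ξ i := by
    rw [show Icc 1 (j - 1) = Ico 1 j from by ext x; simp only [mem_Icc, mem_Ico]; omega,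
        Finset.sum_Ico_eq_sum_range]
    refine Finset.sum_congr rfl ?_
    intro k _
    rw [Finset.mul_sum]
    refine Finset.sum_congr (by congr 1 <;> omega) ?_
    intro i hi
    have hi' : i ∈ Icc (k + 2) j := by
      simp only [mem_Icc] at hi ⊢; omega
    have hii := mem_Icc.mp hi'
    have hξi : 0 < ξ i := hξpos i (by omega) (by omega)
    have herase : ∏ m ∈ (Icc (k + 2) j).erase i, ξ m
        = (∏ m ∈ Icc (k + 2) j, ξ m) / ξ i := by
      rw [eq_div_iff (ne_of_gt hξi)]
      exact Finset.prod_erase_mul _ _ hi'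
    rw [herase, show (1 + k) - 1 = k from by omega, show 1 + k + 1 = k + 2 from by omega,
        mul_div_assoc']
  -- termwise nonnegativity
  have htnn : ∀ k, k ≤ j → ∀ i ∈ Icc 1 j,
      0 ≤ (∏ l ∈ Icc 0 (k - 1), α l) * (∏ m ∈ Icc (k + 1) j, ξ m) / ξ i := by
    intro k hk i hi
    have hii := mem_Icc.mp hi
    have hξi : 0 < ξ i := hξpos i hii.1 (by omega)
    have := hApos k hk
    have := hQpos k
    positivity
  -- the comparison
  have hcomp : ∑ k ∈ Icc 1 (j - 1), ∑ i ∈ Icc (k + 1) j,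
        (∏ l ∈ Icc 0 (k - 1), α l) * (∏ m ∈ Icc (k + 1) j, ξ m) / ξ i
      ≤ ∑ i ∈ Icc 1 j, ∑ k ∈ Icc 1 j,
        (∏ l ∈ Icc 0 (k - 1), α l) * (∏ m ∈ Icc (k + 1) j, ξ m) / ξ i := by
    rw [Finset.sum_comm]
    calc ∑ k ∈ Icc 1 (j - 1), ∑ i ∈ Icc (k + 1) j,
          (∏ l ∈ Icc 0 (k - 1), α l) * (∏ m ∈ Icc (k + 1) j, ξ m) / ξ i
        ≤ ∑ k ∈ Icc 1 (j - 1), ∑ i ∈ Icc 1 j,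
          (∏ l ∈ Icc 0 (k - 1), α l) * (∏ m ∈ Icc (k + 1) j, ξ m) / ξ i := by
          refine Finset.sum_le_sum ?_
          intro k hk
          have hkk := mem_Icc.mp hk
          refine Finset.sum_le_sum_of_subset_of_nonneg ?_ ?_
          · intro x hx; simp only [mem_Icc] at hx ⊢; omega
          · intro i hi _
            exact htnn k (by omega) i hi
      _ ≤ ∑ k ∈ Icc 1 j, ∑ i ∈ Icc 1 j,
          (∏ l ∈ Icc 0 (k - 1), α l) * (∏ m ∈ Icc (k + 1) j, ξ m) / ξ i := by
          refine Finset.sum_le_sum_of_subset_of_nonneg ?_ ?_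
          · intro x hx; simp only [mem_Icc] at hx ⊢; omega
          · intro k hk _
            refine Finset.sum_nonneg ?_
            intro i hi
            exact htnn k (mem_Icc.mp hk).2 i hi
  -- conclude
  have hfinal : K * (∑ k ∈ range (j - 1), (∏ l ∈ Icc 0 k, α l) *
        ∑ i ∈ Icc (k + 2) j, ∏ m ∈ (Icc (k + 2) j).erase i, ξ m)
      ≤ ξ (j + 1) * ∑ i ∈ Icc 1 j, ∏ m ∈ (Icc 1 j).erase i, ξ m := by
    rw [hS1, hS2]
    exact mul_le_mul_of_nonneg_left hcomp (le_of_lt hKpos)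
  rw [hsplit]
  have := hPpos
  intro hcontr
  nlinarith [hfinal, hPpos]
end

section
/- Let v ∈ ℝ^{j+1} satisfy vᵀ·T(0) = 0. If v_1 = 0 and v_{j+1} = 0, then v = 0. In other words, every nonzero left null vector of T(0) has a nonzero first or last component. -/
open Finset

/-- Every left null vector of `T(0)` (the negative of the infected
block of the Jacobian of the relapsing host–vector model at the disease-free
equilibrium) whose first and last components vanish is the zero vector; equivalently,
every nonzero left null vector of `T(0)` has a nonzero first or last component.
(Rows/columns are 0-indexed: `i : Fin (j+1)` is the 1-indexed row `i+1`.) -/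
theorem stmt15 (j : ℕ) (hj : 1 ≤ j)
    (α μ : ℕ → ℝ) (γ μt f c cv Sb Sbv : ℝ)
    (hα : ∀ i, 1 ≤ i → i ≤ j - 1 → 0 < α i)
    (hμ : ∀ i, 1 ≤ i → i ≤ j → 0 < μ i)
    (hγ : 0 < γ) (hμt : 0 < μt) (hf : 0 < f) (hc : 0 < c) (hcv : 0 < cv)
    (hSb : 0 < Sb) (hSbv : 0 < Sbv)
    (ξ : ℕ → ℝ)
    (hξ : ∀ i, 1 ≤ i → i ≤ j - 1 → ξ i = α i + μ i)
    (hξj : ξ j = γ + μ j) (hξj1 : ξ (j + 1) = μt)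
    (T0 : Matrix (Fin (j + 1)) (Fin (j + 1)) ℝ)
    (hT0 : T0 = Matrix.of fun i l : Fin (j + 1) =>
      if i = l then ξ ((i : ℕ) + 1)
      else if (i : ℕ) = (l : ℕ) + 1 ∧ (i : ℕ) ≤ j - 1 then -α ((l : ℕ) + 1)
      else if (i : ℕ) = 0 ∧ (l : ℕ) = j then -(f * cv)
      else if (i : ℕ) = j ∧ (l : ℕ) < j then -(f * c * Sbv / Sb)
      else 0)
    (v : Fin (j + 1) → ℝ) (hv : Matrix.vecMul v T0 = 0)
    (h1 : v 0 = 0) (hlast : v (Fin.last j) = 0) :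
    v = 0 := by
  subst hT0
  have hξpos : ∀ l, l < j → 0 < ξ (l + 1) := by
    intro l hl
    by_cases h : l + 1 = j
    · rw [h, hξj]; linarith [hμ j (by omega) le_rfl]
    · rw [hξ (l + 1) (by omega) (by omega)]
      linarith [hα (l + 1) (by omega) (by omega), hμ (l + 1) (by omega) (by omega)]
  have key : ∀ L : Fin (j + 1), ∀ hl : (L : ℕ) < j,
      v L * ξ ((L : ℕ) + 1) =
        if h : (L : ℕ) + 1 ≤ j - 1 then
          v ⟨(L : ℕ) + 1, by omega⟩ * α ((L : ℕ) + 1) else 0 := by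
    intro L hl
    have hv' := congrFun hv L
    simp only [Matrix.vecMul, dotProduct, Pi.zero_apply] at hv'
    have hpt : ∀ i : Fin (j + 1), v i * Matrix.of (fun i l : Fin (j + 1) =>
      if i = l then ξ ((i : ℕ) + 1)
      else if (i : ℕ) = (l : ℕ) + 1 ∧ (i : ℕ) ≤ j - 1 then -α ((l : ℕ) + 1)
      else if (i : ℕ) = 0 ∧ (l : ℕ) = j then -(f * cv)
      else if (i : ℕ) = j ∧ (l : ℕ) < j then -(f * c * Sbv / Sb)
      else 0) i L =
        (if i = L then v L * ξ ((L : ℕ) + 1) else 0) +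
        (if (i : ℕ) = (L : ℕ) + 1 ∧ (L : ℕ) + 1 ≤ j - 1 then -(v i * α ((L : ℕ) + 1)) else 0) := by
      intro i
      simp only [Matrix.of_apply]
      by_cases h1' : i = L
      · subst h1'
        rw [if_pos rfl, if_pos rfl,
          if_neg (show ¬((i : ℕ) = (i : ℕ) + 1 ∧ (i : ℕ) + 1 ≤ j - 1) by omega), add_zero]
      · have hiL : (i : ℕ) ≠ (L : ℕ) := fun h => h1' (Fin.ext h)
        rw [if_neg h1', if_neg h1']
        by_cases h2 : (i : ℕ) = (L : ℕ) + 1 ∧ (L : ℕ) + 1 ≤ j - 1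
        · rw [if_pos (⟨h2.1, by omega⟩ : (i : ℕ) = (L : ℕ) + 1 ∧ (i : ℕ) ≤ j - 1), if_pos h2]
          ring
        · rw [if_neg (by omega : ¬((i : ℕ) = (L : ℕ) + 1 ∧ (i : ℕ) ≤ j - 1)), if_neg h2,
            if_neg (by omega : ¬((i : ℕ) = 0 ∧ (L : ℕ) = j))]
          by_cases h3 : (i : ℕ) = j
          · rw [if_pos ⟨h3, hl⟩]
            have hil : i = Fin.last j := Fin.ext (by simpa using h3)
            rw [hil, hlast]; ring
          · rw [if_neg (by omega : ¬((i : ℕ) = j ∧ (L : ℕ) < j))]; ring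
    rw [Finset.sum_congr rfl (fun i _ => hpt i), Finset.sum_add_distrib,
      Finset.sum_ite_eq' Finset.univ L] at hv'
    simp only [Finset.mem_univ, if_true] at hv'
    by_cases h : (L : ℕ) + 1 ≤ j - 1
    · rw [dif_pos h]
      have hrw : ∀ i : Fin (j + 1),
          (if (i : ℕ) = (L : ℕ) + 1 ∧ (L : ℕ) + 1 ≤ j - 1 then -(v i * α ((L : ℕ) + 1)) else 0) =
          (if i = (⟨(L : ℕ) + 1, by omega⟩ : Fin (j + 1)) then -(v i * α ((L : ℕ) + 1)) else 0) := by
        intro i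
        by_cases hc' : (i : ℕ) = (L : ℕ) + 1
        · rw [if_pos ⟨hc', h⟩, if_pos (Fin.ext hc')]
        · rw [if_neg (by omega), if_neg (fun hh => hc' (congrArg Fin.val hh))]
      rw [Finset.sum_congr rfl (fun i _ => hrw i), Finset.sum_ite_eq' Finset.univ] at hv'
      simp only [Finset.mem_univ, if_true] at hv'
      linarith
    · rw [dif_neg h]
      have hrw : ∀ i : Fin (j + 1),
          (if (i : ℕ) = (L : ℕ) + 1 ∧ (L : ℕ) + 1 ≤ j - 1 then -(v i * α ((L : ℕ) + 1)) else 0) = 0 := by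
        intro i; rw [if_neg (by omega)]
      rw [Finset.sum_congr rfl (fun i _ => hrw i), Finset.sum_const_zero] at hv'
      linarith
  have main : ∀ n : ℕ, ∀ i : Fin (j + 1), (i : ℕ) = j - n → v i = 0 := by
    intro n
    induction n with
    | zero =>
      intro i hi
      have hil : i = Fin.last j := Fin.ext (by simpa using hi)
      rw [hil]; exact hlast
    | succ n ih =>
      intro i hi
      by_cases hn : n ≥ j
      · exact ih i (by omega)
      · have hl : (i : ℕ) < j := by omega
        have hk := key i hl
        have hξp := hξpos (i : ℕ) hl
        by_cases h : (i : ℕ) + 1 ≤ j - 1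
        · rw [dif_pos h] at hk
          have hz : v (⟨(i : ℕ) + 1, by omega⟩ : Fin (j + 1)) = 0 := ih _ (by simp; omega)
          rw [hz, zero_mul] at hk
          rcases mul_eq_zero.mp hk with h' | h'
          · exact h'
          · linarith
        · rw [dif_neg h] at hk
          rcases mul_eq_zero.mp hk with h' | h'
          · exact h'
          · linarith
  funext i
  exact main (j - (i : ℕ)) i (by omega)
end

section
/- Suppose R_0 = 1 and let v, w ∈ ℝ^{j+1} be componentwise nonnegative vectors with vᵀ·T(0) = 0, T(0)·w = 0, and v·w = 1. Then the bifurcation coefficients satisfy: b := f·(v_1·w_{j+1}·c_v + v_{j+1}·(c·S̄_v/S̄)·Σ_{k=1}^{j} w_k) > 0 (in particular b ≠ 0), and a := −(f²·c_v²/(S̄·μ_s) + f²·c²·S̄_v/(S̄²·μ̃_s))·(Σ_{i=1}^{j+1} v_i)·(Σ_{k=1}^{j+1} w_k)² < 0. -/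
open Finset

lemma sum_two' {n : ℕ} (g : Fin n → ℝ) (a b : Fin n) (x y : ℝ)
    (hg : ∀ l, g l = (if l = a then x else 0) + (if l = b then y else 0)) :
    ∑ l, g l = x + y := by
  simp [hg, Finset.sum_add_distrib, Finset.sum_ite_eq']

lemma sum_three' {n : ℕ} (g : Fin n → ℝ) (a b c : Fin n) (x y z : ℝ)
    (hg : ∀ l, g l = (if l = a then x else 0) + (if l = b then y else 0)
      + (if l = c then z else 0)) :
    ∑ l, g l = x + y + z := by
  simp [hg, Finset.sum_add_distrib, Finset.sum_ite_eq']


set_option maxHeartbeats 1000000 in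
/-- At `R_0 = 1`, for componentwise nonnegative left/right null
vectors `v, w` of `T(0)` normalized by `v·w = 1`, the van den Driessche–Watmough
bifurcation coefficients of the relapsing host–vector model satisfy
`b = f·(v_1·w_{j+1}·c_v + v_{j+1}·(c·S̄_v/S̄)·Σ_{k=1}^{j} w_k) > 0` (in particular
`b ≠ 0`) and
`a = −(f²·c_v²/(S̄·μ_s) + f²·c²·S̄_v/(S̄²·μ̃_s))·(Σ_i v_i)·(Σ_k w_k)² < 0`.
(Rows/columns are 0-indexed: `i : Fin (j+1)` is the 1-indexed row `i+1`.) -/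
theorem stmt16 (j : ℕ) (hj : 1 ≤ j)
    (α μ : ℕ → ℝ) (γ μt f c cv Sb Sbv μs μts R0 : ℝ)
    (hα0 : α 0 = 1)
    (hα : ∀ i, 1 ≤ i → i ≤ j - 1 → 0 < α i)
    (hμ : ∀ i, 1 ≤ i → i ≤ j → 0 < μ i)
    (hγ : 0 < γ) (hμt : 0 < μt) (hf : 0 < f) (hc : 0 < c) (hcv : 0 < cv)
    (hSb : 0 < Sb) (hSbv : 0 < Sbv) (hμs : 0 < μs) (hμts : 0 < μts)
    (ξ : ℕ → ℝ)
    (hξ : ∀ i, 1 ≤ i → i ≤ j - 1 → ξ i = α i + μ i)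
    (hξj : ξ j = γ + μ j) (hξj1 : ξ (j + 1) = μt)
    (hR0 : 0 < R0)
    (hR0sq : R0 ^ 2 = f ^ 2 * c * cv * Sbv / (Sb * ξ (j + 1)) *
      ∑ k ∈ Icc 1 j, (∏ l ∈ Icc 0 (k - 1), α l) / ∏ l ∈ Icc 1 k, ξ l)
    (hR0one : R0 = 1)
    (T0 : Matrix (Fin (j + 1)) (Fin (j + 1)) ℝ)
    (hT0 : T0 = Matrix.of fun i l : Fin (j + 1) =>
      if i = l then ξ ((i : ℕ) + 1)
      else if (i : ℕ) = (l : ℕ) + 1 ∧ (i : ℕ) ≤ j - 1 then -α ((l : ℕ) + 1)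
      else if (i : ℕ) = 0 ∧ (l : ℕ) = j then -(f * cv)
      else if (i : ℕ) = j ∧ (l : ℕ) < j then -(f * c * Sbv / Sb)
      else 0)
    (v w : Fin (j + 1) → ℝ)
    (hvnonneg : ∀ i, 0 ≤ v i) (hwnonneg : ∀ i, 0 ≤ w i)
    (hv : Matrix.vecMul v T0 = 0) (hw : T0.mulVec w = 0)
    (hvw : dotProduct v w = 1) :
    0 < f * (v 0 * w (Fin.last j) * cv +
        v (Fin.last j) * (c * Sbv / Sb) *
          ∑ i ∈ univ.filter (fun i : Fin (j + 1) => (i : ℕ) < j), w i) ∧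
    -((f ^ 2 * cv ^ 2 / (Sb * μs) + f ^ 2 * c ^ 2 * Sbv / (Sb ^ 2 * μts)) *
        (∑ i, v i) * (∑ i, w i) ^ 2) < 0 := by
  have hK : 0 < f * c * Sbv / Sb := by positivity
  -- positivity of ξ on 1..j+1
  have hξpos : ∀ i, 1 ≤ i → i ≤ j + 1 → 0 < ξ i := by
    intro i h1 h2
    rcases lt_trichotomy i j with h | h | h
    · rw [hξ i h1 (by omega)]
      exact add_pos (hα i h1 (by omega)) (hμ i h1 (by omega))
    · subst h; rw [hξj]; exact add_pos hγ (hμ i h1 le_rfl)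
    · have : i = j + 1 := by omega
      subst this; rw [hξj1]; exact hμt
  -- row equations
  have hw' : ∀ i : Fin (j + 1), ∑ l, T0 i l * w l = 0 := by
    intro i
    have := congrFun hw i
    simpa [Matrix.mulVec, dotProduct] using this
  have hv' : ∀ l : Fin (j + 1), ∑ i, v i * T0 i l = 0 := by
    intro l
    have := congrFun hv l
    simpa [Matrix.vecMul, dotProduct] using this
  -- Row 0 : ξ 1 * w 0 = f*cv * w last
  have erow0 : ξ 1 * w ⟨0, by omega⟩ = f * cv * w (Fin.last j) := by
    have h := hw' ⟨0, by omega⟩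
    rw [sum_two' _ ⟨0, by omega⟩ (Fin.last j) (ξ 1 * w ⟨0, by omega⟩)
        (-(f * cv) * w (Fin.last j)) ?_] at h
    · linarith
    · intro l
      rcases l with ⟨lv, hl⟩
      rw [hT0]
      clear hT0 hR0sq hv hw hvw hw' hv' hR0 hR0one hξ hξj hξj1 hα hμ hvnonneg hwnonneg
      simp only [Matrix.of_apply, Fin.mk.injEq, Fin.ext_iff, Fin.val_last, Fin.val_mk]
      split_ifs <;> first | tauto | omega | (subst_vars; simp [Fin.last])
  -- Row i, 1 ≤ i ≤ j-1 : ξ (i+1) * w i = α i * w (i-1)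
  have erowi : ∀ i (h1 : 1 ≤ i) (h2 : i ≤ j - 1),
      ξ (i + 1) * w ⟨i, by omega⟩ = α i * w ⟨i - 1, by omega⟩ := by
    intro i h1 h2
    have h := hw' ⟨i, by omega⟩
    rw [sum_two' _ ⟨i, by omega⟩ ⟨i - 1, by omega⟩ (ξ (i + 1) * w ⟨i, by omega⟩)
        (-α i * w ⟨i - 1, by omega⟩) ?_] at h
    · linarith
    · intro l
      rcases l with ⟨lv, hl⟩
      rw [hT0]
      clear hT0 hR0sq hv hw hvw hw' hv' hR0 hR0one hξ hξj hξj1 hα hμ hvnonneg hwnonneg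
      simp only [Matrix.of_apply, Fin.mk.injEq, Fin.ext_iff, Fin.val_last, Fin.val_mk]
      split_ifs <;>
        first
          | tauto
          | omega
          | (subst_vars; simp [Fin.last, Nat.sub_add_cancel h1, Nat.add_sub_cancel])
  -- Column j : ξ (j+1) * v last = f*cv * v 0
  -- Column l ≤ j-2 : ξ (l+1) * v l = α (l+1) * v (l+1) + K * v last
  have ecol : ∀ l (hl2 : l + 2 ≤ j),
      ξ (l + 1) * v ⟨l, by omega⟩ =
        α (l + 1) * v ⟨l + 1, by omega⟩ + (f * c * Sbv / Sb) * v (Fin.last j) := by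
    intro l hl2
    have h := hv' ⟨l, by omega⟩
    rw [sum_three' _ ⟨l, by omega⟩ ⟨l + 1, by omega⟩ (Fin.last j)
        (v ⟨l, by omega⟩ * ξ (l + 1)) (v ⟨l + 1, by omega⟩ * -α (l + 1))
        (v (Fin.last j) * -(f * c * Sbv / Sb)) ?_] at h
    · linarith
    · intro i
      rcases i with ⟨iv, hi⟩
      rw [hT0]
      clear hT0 hR0sq hv hw hvw hw' hv' hR0 hR0one hξ hξj hξj1 hα hμ hvnonneg hwnonneg
      simp only [Matrix.of_apply, Fin.mk.injEq, Fin.ext_iff, Fin.val_last, Fin.val_mk]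
      split_ifs <;>
        first
          | tauto
          | omega
          | (subst_vars; simp [Fin.last, Nat.add_sub_cancel]; try ring)
  -- Column j-1 : ξ j * v (j-1) = K * v last
  have ecoljm1 : ξ j * v ⟨j - 1, by omega⟩ = (f * c * Sbv / Sb) * v (Fin.last j) := by
    have h := hv' ⟨j - 1, by omega⟩
    rw [sum_two' _ ⟨j - 1, by omega⟩ (Fin.last j)
        (v ⟨j - 1, by omega⟩ * ξ ((j - 1) + 1)) (v (Fin.last j) * -(f * c * Sbv / Sb)) ?_] at h
    · have e : j - 1 + 1 = j := by omega
      rw [e] at h; linarith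
    · intro i
      rcases i with ⟨iv, hi⟩
      rw [hT0]
      clear hT0 hR0sq hv hw hvw hw' hv' hR0 hR0one hξ hξj hξj1 hα hμ hvnonneg hwnonneg
      simp only [Matrix.of_apply, Fin.mk.injEq, Fin.ext_iff, Fin.val_last, Fin.val_mk]
      split_ifs <;>
        first
          | tauto
          | omega
          | (subst_vars; simp [Fin.last, Nat.sub_add_cancel hj]; try ring)
  -- existence of a positive product coordinate
  have hex : ∃ i : Fin (j + 1), 0 < v i * w i := by
    by_contra hcon
    push_neg at hcon
    have hle : dotProduct v w ≤ 0 :=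
      Finset.sum_nonpos fun i _ => hcon i
    rw [hvw] at hle; linarith
  obtain ⟨i0, hi0⟩ := hex
  have hvi0 : 0 < v i0 := by
    rcases (hvnonneg i0).lt_or_eq with h | h
    · exact h
    · exact absurd hi0 (by rw [← h]; simp)
  have hwi0 : 0 < w i0 := by
    rcases (hwnonneg i0).lt_or_eq with h | h
    · exact h
    · exact absurd hi0 (by rw [← h]; simp)
  -- (A) : if w last = 0 then w = 0
  have hA : w (Fin.last j) = 0 → ∀ k (hk : k < j + 1), w ⟨k, hk⟩ = 0 := by
    intro h0
    have key : ∀ k (hk : k ≤ j), w ⟨k, by omega⟩ = 0 := by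
      intro k
      induction k with
      | zero =>
        intro _
        have := erow0
        rw [h0] at this
        have hx1 : 0 < ξ 1 := hξpos 1 le_rfl (by omega)
        have : ξ 1 * w ⟨0, by omega⟩ = 0 := by rw [this]; ring
        exact (mul_eq_zero.1 this).resolve_left (by positivity)
      | succ k ih =>
        intro hk
        by_cases hkj : k + 1 = j
        · have : (⟨k + 1, by omega⟩ : Fin (j + 1)) = Fin.last j := Fin.ext (by simp [hkj])
          rw [this, h0]
        · have hk1 : k + 1 ≤ j - 1 := by omega
          have := erowi (k + 1) (by omega) hk1
          have hprev : w ⟨k + 1 - 1, by omega⟩ = 0 := by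
            have e : k + 1 - 1 = k := by omega
            have := ih (by omega)
            convert this using 2 <;> simp [e]
          rw [hprev, mul_zero] at this
          have hx : 0 < ξ (k + 1 + 1) := hξpos _ (by omega) (by omega)
          exact (mul_eq_zero.1 this).resolve_left (by positivity)
    intro k hk
    exact key k (by omega)
  -- (B) : if v 0 = 0 then v = 0
  have hB : v ⟨0, by omega⟩ = 0 → ∀ k (hk : k < j + 1), v ⟨k, hk⟩ = 0 := by
    intro h0
    have hvlast : v (Fin.last j) = 0 := by
      by_cases hj1 : j = 1
      · have h := ecoljm1
        have e : (⟨j - 1, by omega⟩ : Fin (j + 1)) = ⟨0, by omega⟩ :=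
          Fin.ext (by simp [hj1])
        rw [e, h0, mul_zero] at h
        have h2 : f * c * Sbv / Sb * v (Fin.last j) = 0 := h.symm
        exact (mul_eq_zero.1 h2).resolve_left (ne_of_gt hK)
      · have h := ecol 0 (by omega)
        rw [h0, mul_zero] at h
        have h1 : 0 ≤ α (0 + 1) * v ⟨0 + 1, by omega⟩ :=
          mul_nonneg (le_of_lt (hα 1 le_rfl (by omega))) (hvnonneg _)
        have h2 : 0 ≤ (f * c * Sbv / Sb) * v (Fin.last j) :=
          mul_nonneg (le_of_lt hK) (hvnonneg _)
        have h3 : (f * c * Sbv / Sb) * v (Fin.last j) = 0 := by linarith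
        have := hvnonneg (Fin.last j)
        nlinarith
    have key : ∀ k (hk : k ≤ j), v ⟨k, by omega⟩ = 0 := by
      intro k
      induction k with
      | zero => intro _; exact h0
      | succ k ih =>
        intro hk
        by_cases hkj : k + 1 = j
        · have : (⟨k + 1, by omega⟩ : Fin (j + 1)) = Fin.last j := Fin.ext (by simp [hkj])
          rw [this, hvlast]
        · have h := ecol k (by omega)
          rw [ih (by omega), mul_zero, hvlast, mul_zero, add_zero] at h
          have hak : 0 < α (k + 1) := hα (k + 1) (by omega) (by omega)
          have := h.symm
          exact (mul_eq_zero.1 this).resolve_left (by positivity)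
    intro k hk
    exact key k (by omega)
  -- w last > 0, v 0 > 0
  have hwlast : 0 < w (Fin.last j) := by
    rcases (hwnonneg (Fin.last j)).lt_or_eq with h | h
    · exact h
    · exfalso
      have := hA h.symm i0.val i0.isLt
      rw [Fin.eta] at this
      rw [this] at hwi0; exact lt_irrefl 0 hwi0
  have hv0 : 0 < v ⟨0, by omega⟩ := by
    rcases (hvnonneg ⟨0, by omega⟩).lt_or_eq with h | h
    · exact h
    · exfalso
      have := hB h.symm i0.val i0.isLt
      rw [Fin.eta] at this
      rw [this] at hvi0; exact lt_irrefl 0 hvi0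
  have hv0' : 0 < v 0 := by
    have : (0 : Fin (j + 1)) = ⟨0, by omega⟩ := rfl
    rw [this]; exact hv0
  constructor
  · apply mul_pos hf
    apply add_pos_of_pos_of_nonneg
    · exact mul_pos (mul_pos hv0' hwlast) hcv
    · apply mul_nonneg (mul_nonneg (hvnonneg _) (le_of_lt (by positivity)))
      exact Finset.sum_nonneg fun i _ => hwnonneg i
  · have hsv : 0 < ∑ i, v i :=
      Finset.sum_pos' (fun i _ => hvnonneg i) ⟨i0, Finset.mem_univ i0, hvi0⟩
    have hsw : 0 < ∑ i, w i :=
      Finset.sum_pos' (fun i _ => hwnonneg i) ⟨i0, Finset.mem_univ i0, hwi0⟩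
    have hC : 0 < f ^ 2 * cv ^ 2 / (Sb * μs) + f ^ 2 * c ^ 2 * Sbv / (Sb ^ 2 * μts) := by
      positivity
    have : 0 < (f ^ 2 * cv ^ 2 / (Sb * μs) + f ^ 2 * c ^ 2 * Sbv / (Sb ^ 2 * μts)) *
        (∑ i, v i) * (∑ i, w i) ^ 2 := by positivity
    linarith
end

section
/- Let j ≥ 2 and let α_1, …, α_{j−1}, μ_1, …, μ_j, γ be positive reals with α_0 = 1. For θ = (θ_1, …, θ_{j−1}) with all θ_i ≥ 0, define G(θ) = Σ_{k=1}^{j} Π_{l=1}^{k} α_{l−1}/d_l(θ), where d_l(θ) = α_l + μ_l + θ_l for 1 ≤ l ≤ j−1 and d_j(θ) = γ + μ_j. If θ ≤ θ' componentwise and θ_i < θ'_i for some i, then G(θ') < G(θ). Consequently, in the relapsing model with removal to the recovered compartment, the basic reproduction number R_0 = f·√((c·c_v·S̄_v/(μ̃·S̄))·G(θ)) strictly decreases when any removal (treatment) rate θ_i is increased. -/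
open Finset

/-- `Gθ j α μ γ θ` is the sum `G(θ) = Σ_{k=1}^{j} Π_{l=1}^{k} α_{l−1}/d_l(θ)` appearing
under the square root in `R_0` for the relapsing model with removal rates `θ`, where
`d_l(θ) = α_l + μ_l + θ_l` for `1 ≤ l ≤ j−1` and `d_j(θ) = γ + μ_j`. -/
noncomputable def Gθ (j : ℕ) (α μ : ℕ → ℝ) (γ : ℝ) (θ : ℕ → ℝ) : ℝ :=
  ∑ k ∈ Icc 1 j, ∏ l ∈ Icc 1 k, α (l - 1) / (if l = j then γ + μ j else α l + μ l + θ l)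

/-- If `θ ≤ θ'` componentwise with a strict inequality in some
coordinate, then `G(θ') < G(θ)`; consequently `R_0 = f·√((c·c_v·S̄_v/(μ̃·S̄))·G(θ))`
strictly decreases when any removal (treatment) rate is increased. -/
theorem stmt17 (j : ℕ) (hj : 2 ≤ j) (α μ : ℕ → ℝ) (γ : ℝ)
    (hα0 : α 0 = 1)
    (hα : ∀ l, 1 ≤ l → l ≤ j - 1 → 0 < α l)
    (hμ : ∀ l, 1 ≤ l → l ≤ j → 0 < μ l) (hγ : 0 < γ)
    (f c cv Sb Sbv μt : ℝ) (hf : 0 < f) (hc : 0 < c) (hcv : 0 < cv)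
    (hSb : 0 < Sb) (hSbv : 0 < Sbv) (hμt : 0 < μt)
    (θ θ' : ℕ → ℝ)
    (hθ : ∀ i ∈ Icc 1 (j - 1), 0 ≤ θ i)
    (hθ' : ∀ i ∈ Icc 1 (j - 1), 0 ≤ θ' i)
    (hle : ∀ i ∈ Icc 1 (j - 1), θ i ≤ θ' i)
    (hlt : ∃ i ∈ Icc 1 (j - 1), θ i < θ' i) :
    Gθ j α μ γ θ' < Gθ j α μ γ θ ∧
      f * Real.sqrt (c * cv * Sbv / (μt * Sb) * Gθ j α μ γ θ') <
        f * Real.sqrt (c * cv * Sbv / (μt * Sb) * Gθ j α μ γ θ) := by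
  obtain ⟨i, hi, hilt⟩ := hlt
  have hi' := hi
  simp only [mem_Icc] at hi'
  -- positivity of numerators
  have hnum : ∀ l, 1 ≤ l → l ≤ j → 0 < α (l - 1) := by
    intro l h1 h2
    rcases Nat.eq_or_lt_of_le h1 with h | h
    · simp [← h, hα0]
    · exact hα _ (by omega) (by omega)
  -- positivity of denominators
  have hden : ∀ (η : ℕ → ℝ), (∀ i ∈ Icc 1 (j-1), 0 ≤ η i) → ∀ l, 1 ≤ l → l ≤ j →
      0 < (if l = j then γ + μ j else α l + μ l + η l) := by
    intro η hη l h1 h2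
    split_ifs with h
    · have := hμ j (by omega) le_rfl; linarith
    · have h2' : l ≤ j - 1 := by omega
      have := hα l h1 h2'
      have := hμ l h1 (by omega)
      have := hη l (mem_Icc.2 ⟨h1, h2'⟩)
      linarith
  -- positivity of each factor / product
  have hfacpos : ∀ (η : ℕ → ℝ), (∀ i ∈ Icc 1 (j-1), 0 ≤ η i) → ∀ l, 1 ≤ l → l ≤ j →
      0 < α (l - 1) / (if l = j then γ + μ j else α l + μ l + η l) := by
    intro η hη l h1 h2
    exact div_pos (hnum l h1 h2) (hden η hη l h1 h2)
  have hprodpos : ∀ (η : ℕ → ℝ), (∀ i ∈ Icc 1 (j-1), 0 ≤ η i) → ∀ k ∈ Icc 1 j,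
      0 < ∏ l ∈ Icc 1 k, α (l - 1) / (if l = j then γ + μ j else α l + μ l + η l) := by
    intro η hη k hk
    simp only [mem_Icc] at hk
    exact Finset.prod_pos fun l hl => by
      simp only [mem_Icc] at hl
      exact hfacpos η hη l hl.1 (by omega)
  -- factorwise inequality
  have hfacle : ∀ l, 1 ≤ l → l ≤ j →
      α (l - 1) / (if l = j then γ + μ j else α l + μ l + θ' l) ≤
      α (l - 1) / (if l = j then γ + μ j else α l + μ l + θ l) := by
    intro l h1 h2
    apply div_le_div_of_nonneg_left (hnum l h1 h2).le (hden θ hθ l h1 h2)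
    split_ifs with h
    · exact le_rfl
    · have := hle l (mem_Icc.2 ⟨h1, by omega⟩); linarith
  -- productwise inequality
  have hprodle : ∀ k ∈ Icc 1 j,
      (∏ l ∈ Icc 1 k, α (l - 1) / (if l = j then γ + μ j else α l + μ l + θ' l)) ≤
      ∏ l ∈ Icc 1 k, α (l - 1) / (if l = j then γ + μ j else α l + μ l + θ l) := by
    intro k hk
    simp only [mem_Icc] at hk
    refine Finset.prod_le_prod (fun l hl => ?_) (fun l hl => ?_) <;>
      simp only [mem_Icc] at hl
    · exact (hfacpos θ' hθ' l hl.1 (by omega)).le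
    · exact hfacle l hl.1 (by omega)
  -- strict product inequality at k = j
  have hjmem : j ∈ Icc 1 j := mem_Icc.2 ⟨by omega, le_rfl⟩
  have hstrict :
      (∏ l ∈ Icc 1 j, α (l - 1) / (if l = j then γ + μ j else α l + μ l + θ' l)) <
      ∏ l ∈ Icc 1 j, α (l - 1) / (if l = j then γ + μ j else α l + μ l + θ l) := by
    refine Finset.prod_lt_prod (fun l hl => ?_) (fun l hl => ?_) ⟨i, ?_, ?_⟩
    · simp only [mem_Icc] at hl; exact hfacpos θ' hθ' l hl.1 hl.2
    · simp only [mem_Icc] at hl; exact hfacle l hl.1 hl.2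
    · exact mem_Icc.2 ⟨hi'.1, by omega⟩
    · have hij : i ≠ j := by omega
      simp only [hij, if_false]
      have hd := hden θ hθ i hi'.1 (by omega)
      simp only [hij, if_false] at hd
      exact div_lt_div_of_pos_left (hnum i hi'.1 (by omega)) hd (by linarith)
  have hG : Gθ j α μ γ θ' < Gθ j α μ γ θ := by
    unfold Gθ
    exact Finset.sum_lt_sum hprodle ⟨j, hjmem, hstrict⟩
  refine ⟨hG, ?_⟩
  have hC : 0 < c * cv * Sbv / (μt * Sb) := by positivity
  have hGpos : 0 < Gθ j α μ γ θ' := by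
    unfold Gθ
    refine Finset.sum_pos (fun k hk => hprodpos θ' hθ' k hk) ⟨j, hjmem⟩
  have h1 : 0 ≤ c * cv * Sbv / (μt * Sb) * Gθ j α μ γ θ' := by positivity
  exact mul_lt_mul_of_pos_left
    (Real.sqrt_lt_sqrt h1 (by nlinarith)) hf
end
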